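/- arXiv:2310.03395 — 6 statements merged into one kernel-verified Lean document; each statement's English description precedes it below -/
import Mathlib

section
/- For every r ∈ (0,1), every real z, y ∈ [0,1] and every real w ∈ (0,1), writing w̆ = (1−r)w, ρ̃(w) = 1 − √(1−w²) and Z̃(z,w) = (1 − ρ̃(w))/((1−w)(1 − z·ρ̃(w))), the series Σ_{t≥0} w^t · E[ z^{N×_t} · y^{N•_t} ] converges and equals Z̃(z, w̆) / (1 − r·y·w·Z̃(z, w̆)). -/
open Finset Filter

namespace ResetPolya

/-- Probability weight of an outcome of the reset Pólya walk with horizon `t`: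
independently at each step, the reset indicator is `true` with probability `r`,
and the ±1 step is chosen with probability 1/2 each. -/
noncomputable def wt (r : ℝ) {t : ℕ} (ω : Fin t → Bool × Bool) : ℝ :=
  ∏ k : Fin t, ((if (ω k).1 then r else 1 - r) * (1 / 2))

/-- Position of the reset Pólya walk: `x_0 = 0`; at step `k+1`, the walker is reset
to the origin if the reset indicator holds, otherwise it moves by ±1. -/
def pos {t : ℕ} (ω : Fin t → Bool × Bool) : ℕ → ℤ
  | 0 => 0
  | k + 1 =>
    if h : k < t then
      if (ω ⟨k, h⟩).1 then 0
      else pos ω k + (if (ω ⟨k, h⟩).2 then 1 else -1)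
    else pos ω k

/-- Number of resetting events up to time `t`. -/
def Ndot {t : ℕ} (ω : Fin t → Bool × Bool) : ℕ :=
  (Finset.univ.filter fun k : Fin t => (ω k).1 = true).card

/-- Number of spontaneous returns to the origin up to time `t`. -/
def Ncross {t : ℕ} (ω : Fin t → Bool × Bool) : ℕ :=
  (Finset.univ.filter fun k : Fin t => (ω k).1 = false ∧ pos ω (k.1 + 1) = 0).card

/-- Expectation of an observable of the reset Pólya walk with horizon `t`. -/
noncomputable def expect (r : ℝ) (t : ℕ) (f : (Fin t → Bool × Bool) → ℝ) : ℝ :=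
  ∑ ω : Fin t → Bool × Bool, wt r ω * f ω

open scoped Classical in
/-- Probability of an event for the reset Pólya walk with horizon `t`. -/
noncomputable def prob (r : ℝ) (t : ℕ) (E : (Fin t → Bool × Bool) → Prop) : ℝ :=
  expect r t fun ω => if E ω then 1 else 0

end ResetPolya
open Finset Filter ResetPolya

namespace RPAux

abbrev A := Bool × Bool

/-- step weight -/
noncomputable def c (r : ℝ) (a : A) : ℝ := (if a.1 then r else 1 - r) * (1 / 2)

lemma wt_snoc (r : ℝ) {t : ℕ} (ω : Fin t → A) (a : A) :
    wt r (Fin.snoc ω a) = wt r ω * c r a := by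
  unfold wt c
  rw [Fin.prod_univ_castSucc]
  simp [Fin.snoc_castSucc, Fin.snoc_last]

lemma pos_snoc {t : ℕ} (ω : Fin t → A) (a : A) :
    ∀ k, k ≤ t → pos (Fin.snoc ω a) k = pos ω k := by
  intro k hk
  induction k with
  | zero => rfl
  | succ n ih =>
    have hn : n < t := hk
    have h1 : n < t + 1 := Nat.lt_succ_of_lt hn
    have he : (⟨n, h1⟩ : Fin (t+1)) = Fin.castSucc ⟨n, hn⟩ := rfl
    rw [pos, pos]
    rw [dif_pos h1, dif_pos hn, he, Fin.snoc_castSucc, ih (le_of_lt hn)]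

lemma pos_snoc_last {t : ℕ} (ω : Fin t → A) (a : A) :
    pos (Fin.snoc ω a) (t + 1)
      = if a.1 then 0 else pos ω t + (if a.2 then 1 else -1) := by
  have h1 : t < t + 1 := Nat.lt_succ_self t
  have he : (⟨t, h1⟩ : Fin (t+1)) = Fin.last t := rfl
  rw [pos, dif_pos h1, he, Fin.snoc_last, pos_snoc ω a t le_rfl]

lemma Ndot_snoc {t : ℕ} (ω : Fin t → A) (a : A) :
    Ndot (Fin.snoc ω a) = Ndot ω + if a.1 then 1 else 0 := by
  unfold Ndot
  rw [Finset.card_filter, Finset.card_filter, Fin.sum_univ_castSucc]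
  simp [Fin.snoc_castSucc, Fin.snoc_last]

lemma Ncross_snoc {t : ℕ} (ω : Fin t → A) (a : A) :
    Ncross (Fin.snoc ω a)
      = Ncross ω + if a.1 = false ∧ pos (Fin.snoc ω a) (t + 1) = 0 then 1 else 0 := by
  unfold Ncross
  rw [Finset.card_filter, Finset.card_filter, Fin.sum_univ_castSucc]
  congr 1
  · apply Finset.sum_congr rfl
    intro i _
    have h2 : ((Fin.castSucc i : Fin (t+1)) : ℕ) = (i : ℕ) := rfl
    rw [Fin.snoc_castSucc, h2, pos_snoc ω a (i.1+1) i.2]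
  · simp [Fin.snoc_last]

lemma sum_snoc_eq {t : ℕ} (F : (Fin (t+1) → A) → ℝ) :
    ∑ ω : Fin (t+1) → A, F ω = ∑ a : A, ∑ ω : Fin t → A, F (Fin.snoc ω a) := by
  rw [← Equiv.sum_comp (Fin.snocEquiv fun _ => A) F, Fintype.sum_prod_type]
  rfl

end RPAux
namespace RPAux

variable (r z y : ℝ)

noncomputable def EE (t : ℕ) : ℝ :=
  ∑ ω : Fin t → A, wt r ω * (z ^ Ncross ω * y ^ Ndot ω)

noncomputable def G (t : ℕ) (m : ℤ) : ℝ :=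
  ∑ ω : Fin t → A, if pos ω t = m then wt r ω * (z ^ Ncross ω * y ^ Ndot ω) else 0

lemma EE_zero : EE r z y 0 = 1 := by
  simp [EE, wt, Ncross, Ndot]

lemma G_zero (m : ℤ) : G r z y 0 m = if (0 : ℤ) = m then 1 else 0 := by
  have : ∀ ω : Fin 0 → A, pos ω 0 = 0 := fun _ => rfl
  simp [G, wt, Ncross, Ndot, this]

lemma inner_true {t : ℕ} (s : Bool) :
    ∑ ω : Fin t → A, (wt r (Fin.snoc ω (true, s)) *
        (z ^ Ncross (Fin.snoc ω (true, s)) * y ^ Ndot (Fin.snoc ω (true, s))))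
      = (r * (1/2)) * (y * EE r z y t) := by
  have h : ∀ ω : Fin t → A, wt r (Fin.snoc ω (true, s)) *
        (z ^ Ncross (Fin.snoc ω (true, s)) * y ^ Ndot (Fin.snoc ω (true, s)))
      = (r * (1/2)) * (y * (wt r ω * (z ^ Ncross ω * y ^ Ndot ω))) := by
    intro ω
    rw [wt_snoc, Ncross_snoc, Ndot_snoc]
    simp [c, pow_succ]
    ring
  rw [Finset.sum_congr rfl (fun ω _ => h ω), ← Finset.mul_sum, ← Finset.mul_sum]
  rfl

lemma inner_false {t : ℕ} (s : Bool) :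
    ∑ ω : Fin t → A, (wt r (Fin.snoc ω (false, s)) *
        (z ^ Ncross (Fin.snoc ω (false, s)) * y ^ Ndot (Fin.snoc ω (false, s))))
      = ((1-r) * (1/2)) * (EE r z y t + (z - 1) * G r z y t (-(if s then 1 else -1))) := by
  set ε : ℤ := if s then 1 else -1 with hε
  have h : ∀ ω : Fin t → A, wt r (Fin.snoc ω (false, s)) *
        (z ^ Ncross (Fin.snoc ω (false, s)) * y ^ Ndot (Fin.snoc ω (false, s)))
      = ((1-r)*(1/2)) * (wt r ω * (z ^ Ncross ω * y ^ Ndot ω))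
        + (z - 1) * (((1-r)*(1/2)) *
            (if pos ω t = -ε then wt r ω * (z ^ Ncross ω * y ^ Ndot ω) else 0)) := by
    intro ω
    rw [wt_snoc, Ncross_snoc, Ndot_snoc, pos_snoc_last]
    by_cases hp : pos ω t = -ε
    · have hc : pos ω t + ε = 0 := by rw [hp]; ring
      simp [c, hc, hp, pow_succ, ← hε]; ring
    · have hc : pos ω t + ε ≠ 0 := fun h => hp (by linarith)
      simp [c, hc, hp, ← hε]; ring
  rw [Finset.sum_congr rfl (fun ω _ => h ω), Finset.sum_add_distrib,
    ← Finset.mul_sum, ← Finset.mul_sum, ← Finset.mul_sum]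
  show ((1-r)*(1/2)) * EE r z y t + (z-1) * (((1-r)*(1/2)) * G r z y t (-ε)) = _
  ring

lemma EE_succ {t : ℕ} :
    EE r z y (t+1) = r * y * EE r z y t + (1 - r) * EE r z y t
      + ((1-r) * (1/2)) * (z - 1) * (G r z y t 1 + G r z y t (-1)) := by
  rw [show EE r z y (t+1) = ∑ ω : Fin (t+1) → A,
      wt r ω * (z ^ Ncross ω * y ^ Ndot ω) from rfl, sum_snoc_eq]
  rw [Fintype.sum_prod_type, Fintype.sum_bool]
  rw [Fintype.sum_bool, Fintype.sum_bool]
  rw [inner_true, inner_true, inner_false, inner_false]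
  norm_num
  ring

end RPAux
namespace RPAux

variable (r z y : ℝ)

lemma inner_true_G {t : ℕ} (s : Bool) (m : ℤ) :
    ∑ ω : Fin t → A, (if pos (Fin.snoc ω (true, s)) (t+1) = m then
        wt r (Fin.snoc ω (true, s)) *
          (z ^ Ncross (Fin.snoc ω (true, s)) * y ^ Ndot (Fin.snoc ω (true, s))) else 0)
      = if (0:ℤ) = m then (r * (1/2)) * (y * EE r z y t) else 0 := by
  have hp : ∀ ω : Fin t → A, pos (Fin.snoc ω (true, s)) (t+1) = 0 := by
    intro ω; rw [pos_snoc_last]; simp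
  by_cases hm : (0:ℤ) = m
  · rw [if_pos hm, ← inner_true r z y s]
    exact Finset.sum_congr rfl fun ω _ => by rw [if_pos (by rw [hp ω, hm])]
  · rw [if_neg hm]
    exact Finset.sum_eq_zero fun ω _ => by rw [if_neg (by rw [hp ω]; exact hm)]

lemma inner_false_G {t : ℕ} (s : Bool) (m : ℤ) (hm : m ≠ 0) :
    ∑ ω : Fin t → A, (if pos (Fin.snoc ω (false, s)) (t+1) = m then
        wt r (Fin.snoc ω (false, s)) *
          (z ^ Ncross (Fin.snoc ω (false, s)) * y ^ Ndot (Fin.snoc ω (false, s))) else 0)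
      = ((1-r) * (1/2)) * G r z y t (m - (if s then 1 else -1)) := by
  set ε : ℤ := if s then 1 else -1 with hε
  have hp : ∀ ω : Fin t → A, pos (Fin.snoc ω (false, s)) (t+1) = pos ω t + ε := by
    intro ω; rw [pos_snoc_last]; simp [hε]
  rw [show ((1-r) * (1/2)) * G r z y t (m - ε)
      = ∑ ω : Fin t → A, ((1-r) * (1/2)) *
        (if pos ω t = m - ε then wt r ω * (z ^ Ncross ω * y ^ Ndot ω) else 0) from
    by rw [← Finset.mul_sum]; rfl]
  apply Finset.sum_congr rfl
  intro ω _
  by_cases hc : pos ω t = m - ε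
  · rw [if_pos (by rw [hp ω, hc]; ring), if_pos hc, wt_snoc, Ncross_snoc, Ndot_snoc]
    have h0 : ¬ ((false, s).1 = false ∧ pos (Fin.snoc ω (false, s)) (t + 1) = 0) := by
      rintro ⟨-, h2⟩
      rw [hp ω, hc] at h2
      exact hm (by linarith)
    rw [if_neg h0]
    simp [c]; ring
  · rw [if_neg (by rw [hp ω]; intro h; exact hc (by linarith)), if_neg hc, mul_zero]

lemma inner_false_G0 {t : ℕ} (s : Bool) :
    ∑ ω : Fin t → A, (if pos (Fin.snoc ω (false, s)) (t+1) = 0 then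
        wt r (Fin.snoc ω (false, s)) *
          (z ^ Ncross (Fin.snoc ω (false, s)) * y ^ Ndot (Fin.snoc ω (false, s))) else 0)
      = ((1-r) * (1/2)) * (z * G r z y t (-(if s then 1 else -1))) := by
  set ε : ℤ := if s then 1 else -1 with hε
  have hp : ∀ ω : Fin t → A, pos (Fin.snoc ω (false, s)) (t+1) = pos ω t + ε := by
    intro ω; rw [pos_snoc_last]; simp [hε]
  rw [show ((1-r) * (1/2)) * (z * G r z y t (-ε))
      = ∑ ω : Fin t → A, ((1-r) * (1/2)) *
        (z * (if pos ω t = -ε then wt r ω * (z ^ Ncross ω * y ^ Ndot ω) else 0)) from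
    by rw [← Finset.mul_sum, ← Finset.mul_sum]; rfl]
  apply Finset.sum_congr rfl
  intro ω _
  by_cases hc : pos ω t = -ε
  · rw [if_pos (by rw [hp ω, hc]; ring), if_pos hc, wt_snoc, Ncross_snoc, Ndot_snoc]
    have h0 : ((false, s).1 = false ∧ pos (Fin.snoc ω (false, s)) (t + 1) = 0) :=
      ⟨rfl, by rw [hp ω, hc]; ring⟩
    rw [if_pos h0]
    simp [c, pow_succ]; ring
  · rw [if_neg (by rw [hp ω]; intro h; exact hc (by linarith)), if_neg hc]
    simp

lemma G_unfold {t : ℕ} (m : ℤ) : G r z y (t+1) m = ∑ a : A, ∑ ω : Fin t → A,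
    (if pos (Fin.snoc ω a) (t+1) = m then
      wt r (Fin.snoc ω a) *
        (z ^ Ncross (Fin.snoc ω a) * y ^ Ndot (Fin.snoc ω a)) else 0) := by
  rw [show G r z y (t+1) m = ∑ ω : Fin (t+1) → A,
    (if pos ω (t+1) = m then wt r ω * (z ^ Ncross ω * y ^ Ndot ω) else 0) from rfl]
  exact sum_snoc_eq _

lemma G_succ_zero {t : ℕ} :
    G r z y (t+1) 0 = r * y * EE r z y t
      + ((1-r) * (1/2)) * z * (G r z y t 1 + G r z y t (-1)) := by
  rw [G_unfold, Fintype.sum_prod_type, Fintype.sum_bool, Fintype.sum_bool, Fintype.sum_bool,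
    inner_true_G, inner_true_G, inner_false_G0, inner_false_G0]
  norm_num
  ring

lemma G_succ_ne {t : ℕ} (m : ℤ) (hm : m ≠ 0) :
    G r z y (t+1) m = ((1-r) * (1/2)) * (G r z y t (m-1) + G r z y t (m+1)) := by
  rw [G_unfold, Fintype.sum_prod_type, Fintype.sum_bool, Fintype.sum_bool, Fintype.sum_bool,
    inner_true_G, inner_true_G, inner_false_G r z y true m hm, inner_false_G r z y false m hm]
  rw [if_neg (fun h => hm h.symm)]
  norm_num
  ring

end RPAux
namespace RPAux

variable (r z y : ℝ)

def flip {t : ℕ} (ω : Fin t → A) : Fin t → A := fun k => ((ω k).1, !(ω k).2)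

lemma flip_invol {t : ℕ} : Function.Involutive (flip (t := t)) := by
  intro ω; funext k; simp [flip]

lemma pos_flip {t : ℕ} (ω : Fin t → A) : ∀ k, pos (flip ω) k = - pos ω k := by
  intro k
  induction k with
  | zero => rfl
  | succ n ih =>
    rw [pos, pos]
    by_cases h : n < t
    · rw [dif_pos h, dif_pos h]
      by_cases h1 : (ω ⟨n, h⟩).1 <;> by_cases h2 : (ω ⟨n, h⟩).2 <;>
        simp [flip, h1, h2, ih] <;> ring
    · rw [dif_neg h, dif_neg h, ih]

lemma wt_flip {t : ℕ} (ω : Fin t → A) : wt r (flip ω) = wt r ω := by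
  unfold wt; apply Finset.prod_congr rfl; intro k _; rfl

lemma Ndot_flip {t : ℕ} (ω : Fin t → A) : Ndot (flip ω) = Ndot ω := rfl

lemma Ncross_flip {t : ℕ} (ω : Fin t → A) : Ncross (flip ω) = Ncross ω := by
  unfold Ncross
  congr 1
  apply Finset.filter_congr
  intro k _
  rw [pos_flip ω (k.1+1)]
  simp [flip, neg_eq_zero]

lemma G_symm {t : ℕ} (m : ℤ) : G r z y t m = G r z y t (-m) := by
  unfold G
  rw [← Equiv.sum_comp (flip_invol (t := t)).toPerm]
  apply Finset.sum_congr rfl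
  intro ω _
  have : Function.Involutive.toPerm _ (flip_invol (t := t)) ω = flip ω := rfl
  rw [this, wt_flip, Ndot_flip, Ncross_flip, pos_flip ω t]
  simp only [neg_eq_iff_eq_neg]

lemma sum_wt (t : ℕ) : ∑ ω : Fin t → A, wt r ω = 1 := by
  induction t with
  | zero => simp [wt]
  | succ n ih =>
    rw [show (∑ ω : Fin (n+1) → A, wt r ω) = _ from sum_snoc_eq _]
    have : ∀ a : A, ∑ ω : Fin n → A, wt r (Fin.snoc ω a) = c r a := by
      intro a
      rw [Finset.sum_congr rfl fun ω _ => wt_snoc r ω a, ← Finset.sum_mul, ih, one_mul]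
    rw [Fintype.sum_congr _ _ this, Fintype.sum_prod_type, Fintype.sum_bool,
      Fintype.sum_bool, Fintype.sum_bool]
    simp [c]; ring

variable (hr0 : 0 ≤ r) (hr1 : r ≤ 1) (hz0 : 0 ≤ z) (hz1 : z ≤ 1) (hy0 : 0 ≤ y) (hy1 : y ≤ 1)
include hr0 hr1 hz0 hz1 hy0 hy1

lemma term_mem {t : ℕ} (ω : Fin t → A) :
    0 ≤ wt r ω * (z ^ Ncross ω * y ^ Ndot ω) ∧
      wt r ω * (z ^ Ncross ω * y ^ Ndot ω) ≤ wt r ω := by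
  have hw : 0 ≤ wt r ω := Finset.prod_nonneg fun k _ => by
    split_ifs <;> nlinarith
  have h1 : 0 ≤ z ^ Ncross ω * y ^ Ndot ω := by positivity
  have h2 : z ^ Ncross ω * y ^ Ndot ω ≤ 1 :=
    mul_le_one₀ (pow_le_one₀ hz0 hz1) (by positivity) (pow_le_one₀ hy0 hy1)
  exact ⟨by positivity, by nlinarith⟩

lemma EE_nonneg (t : ℕ) : 0 ≤ EE r z y t :=
  Finset.sum_nonneg fun ω _ => (term_mem r z y hr0 hr1 hz0 hz1 hy0 hy1 ω).1

lemma EE_le_one (t : ℕ) : EE r z y t ≤ 1 := by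
  rw [← sum_wt r t]
  exact Finset.sum_le_sum fun ω _ => (term_mem r z y hr0 hr1 hz0 hz1 hy0 hy1 ω).2

lemma G_nonneg (t : ℕ) (m : ℤ) : 0 ≤ G r z y t m :=
  Finset.sum_nonneg fun ω _ => by
    split
    · exact (term_mem r z y hr0 hr1 hz0 hz1 hy0 hy1 ω).1
    · exact le_refl 0

lemma G_le_one (t : ℕ) (m : ℤ) : G r z y t m ≤ 1 := by
  rw [← sum_wt r t]
  apply Finset.sum_le_sum
  intro ω _
  split
  · exact (term_mem r z y hr0 hr1 hz0 hz1 hy0 hy1 ω).2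
  · exact Finset.prod_nonneg fun k _ => by split_ifs <;> nlinarith

end RPAux
namespace RPAux

lemma geom_force (lam C : ℝ) (hlam : 1 < lam) (e : ℕ → ℝ)
    (hrec : ∀ n, e (n+1) = lam * e n) (hbd : ∀ n, |e n| ≤ C) : e 0 = 0 := by
  have hpow : ∀ n, e n = lam ^ n * e 0 := by
    intro n; induction n with
    | zero => simp
    | succ k ih => rw [hrec k, ih, pow_succ]; ring
  by_contra h0
  obtain ⟨n, hn⟩ := pow_unbounded_of_one_lt (C / |e 0|) hlam
  have he0 : 0 < |e 0| := abs_pos.mpr h0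
  have : C < lam ^ n * |e 0| := by
    rw [div_lt_iff₀ he0] at hn; linarith
  have hb := hbd n
  rw [hpow n, abs_mul, abs_of_pos (by positivity : (0:ℝ) < lam ^ n)] at hb
  linarith

end RPAux

open RPAux

namespace RPAux

lemma tsum3 (c1 c2 c3 : ℝ) (f g h : ℕ → ℝ) (hf : Summable f) (hg : Summable g)
    (hh : Summable h) :
    ∑' t, (c1 * f t + c2 * g t + c3 * h t)
      = c1 * (∑' t, f t) + c2 * (∑' t, g t) + c3 * (∑' t, h t) := by
  rw [Summable.tsum_add ((hf.mul_left c1).add (hg.mul_left c2)) (hh.mul_left c3),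
    Summable.tsum_add (hf.mul_left c1) (hg.mul_left c2), tsum_mul_left, tsum_mul_left, tsum_mul_left]

lemma tsum2 (c1 c2 : ℝ) (f g : ℕ → ℝ) (hf : Summable f) (hg : Summable g) :
    ∑' t, (c1 * f t + c2 * g t) = c1 * (∑' t, f t) + c2 * (∑' t, g t) := by
  rw [Summable.tsum_add (hf.mul_left c1) (hg.mul_left c2), tsum_mul_left, tsum_mul_left]

end RPAux

open ResetPolya

/-- The generating function, in the time variable, of the joint probability
generating function of the numbers of spontaneous returns to the origin and of
resetting events of the reset Pólya walk. -/
theorem statement0 (r : ℝ) (hr : r ∈ Set.Ioo (0 : ℝ) 1)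
    (z : ℝ) (hz : z ∈ Set.Icc (0 : ℝ) 1) (y : ℝ) (hy : y ∈ Set.Icc (0 : ℝ) 1)
    (w : ℝ) (hw : w ∈ Set.Ioo (0 : ℝ) 1)
    (wb : ℝ) (hwb : wb = (1 - r) * w)
    (ρ : ℝ → ℝ) (hρ : ∀ v, ρ v = 1 - Real.sqrt (1 - v ^ 2))
    (Z : ℝ → ℝ → ℝ) (hZ : ∀ a v, Z a v = (1 - ρ v) / ((1 - v) * (1 - a * ρ v))) :
    HasSum (fun t : ℕ => w ^ t * expect r t (fun ω => z ^ Ncross ω * y ^ Ndot ω))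
      (Z z wb / (1 - r * y * w * Z z wb)) := by
  obtain ⟨hr0, hr1⟩ := hr
  obtain ⟨hz0, hz1⟩ := hz
  obtain ⟨hy0, hy1⟩ := hy
  obtain ⟨hw0, hw1⟩ := hw
  obtain ⟨v, hv⟩ : ∃ v : ℝ, v = (1 - r) * w := ⟨_, rfl⟩
  have hv0 : 0 < v := by rw [hv]; exact mul_pos (by linarith) hw0
  have hv1 : v < 1 := by rw [hv]; nlinarith
  have h1v2 : (0:ℝ) < 1 - v ^ 2 := by nlinarith
  obtain ⟨s, hsdef⟩ : ∃ s : ℝ, s = Real.sqrt (1 - v ^ 2) := ⟨_, rfl⟩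
  have hs2 : s ^ 2 = 1 - v ^ 2 := by rw [hsdef]; exact Real.sq_sqrt h1v2.le
  have hs0 : 0 < s := by rw [hsdef]; exact Real.sqrt_pos.mpr h1v2
  have hs1 : s < 1 := by nlinarith
  obtain ⟨ρv, hρvdef⟩ : ∃ p : ℝ, p = 1 - s := ⟨_, rfl⟩
  have hρ0 : 0 < ρv := by rw [hρvdef]; linarith
  have hρ1 : ρv < 1 := by rw [hρvdef]; linarith
  have hρlt : ρv < v := by
    have h2 : (1 - v) ^ 2 < s ^ 2 := by rw [hs2]; nlinarith
    have h3 : 1 - v < s := by nlinarith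
    rw [hρvdef]; linarith
  obtain ⟨lam, hlamdef⟩ : ∃ l : ℝ, l = ρv / v := ⟨_, rfl⟩
  have hlam0 : 0 < lam := by rw [hlamdef]; exact div_pos hρ0 hv0
  have hlam1 : lam < 1 := by rw [hlamdef]; exact (div_lt_one hv0).mpr hρlt
  have hρveq : ρv = v * lam := by rw [hlamdef]; field_simp
  have hkey : v ^ 2 + ρv ^ 2 = 2 * ρv := by rw [hρvdef]; linear_combination hs2
  have hlamrel : v * (1 + lam ^ 2) = 2 * lam := by
    apply mul_left_cancel₀ (ne_of_gt hv0)
    linear_combination hkey - (ρv + v*lam) * hρveq + 2 * hρveq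
  -- the sequences and their sums
  obtain ⟨fE, hfE⟩ : ∃ f : ℕ → ℝ, f = fun t => w ^ t * RPAux.EE r z y t := ⟨_, rfl⟩
  obtain ⟨fG, hfG⟩ : ∃ f : ℤ → ℕ → ℝ, f = fun m t => w ^ t * RPAux.G r z y t m := ⟨_, rfl⟩
  have hgeo : Summable (fun t : ℕ => w ^ t) := summable_geometric_of_lt_one hw0.le hw1
  have hfEnn : ∀ t, 0 ≤ fE t := fun t => by
    rw [hfE]
    exact mul_nonneg (pow_nonneg hw0.le t)
      (RPAux.EE_nonneg r z y hr0.le hr1.le hz0 hz1 hy0 hy1 t)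
  have hfEle : ∀ t, fE t ≤ w ^ t := fun t => by
    rw [hfE]
    exact mul_le_of_le_one_right (pow_nonneg hw0.le t)
      (RPAux.EE_le_one r z y hr0.le hr1.le hz0 hz1 hy0 hy1 t)
  have hSE : Summable fE := Summable.of_nonneg_of_le hfEnn hfEle hgeo
  have hfGnn : ∀ m t, 0 ≤ fG m t := fun m t => by
    rw [hfG]
    exact mul_nonneg (pow_nonneg hw0.le t)
      (RPAux.G_nonneg r z y hr0.le hr1.le hz0 hz1 hy0 hy1 t m)
  have hfGle : ∀ m t, fG m t ≤ w ^ t := fun m t => by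
    rw [hfG]
    exact mul_le_of_le_one_right (pow_nonneg hw0.le t)
      (RPAux.G_le_one r z y hr0.le hr1.le hz0 hz1 hy0 hy1 t m)
  have hSG : ∀ m, Summable (fG m) := fun m => Summable.of_nonneg_of_le (hfGnn m) (hfGle m) hgeo
  obtain ⟨Eh, hEhdef⟩ : ∃ E : ℝ, E = ∑' t, fE t := ⟨_, rfl⟩
  obtain ⟨Gh, hGhdef⟩ : ∃ g : ℤ → ℝ, g = fun m => ∑' t, fG m t := ⟨_, rfl⟩
  have hGh_eval : ∀ m, Gh m = ∑' t, fG m t := fun m => by rw [hGhdef]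
  have hfE0 : fE 0 = 1 := by rw [hfE]; simp [RPAux.EE_zero]
  have hfG00 : fG 0 0 = 1 := by rw [hfG]; simp [RPAux.G_zero]
  have hfGm0 : ∀ m : ℤ, m ≠ 0 → fG m 0 = 0 := by
    intro m hm
    rw [hfG]
    simp only [pow_zero, one_mul, RPAux.G_zero]
    rw [if_neg (fun h : (0:ℤ) = m => hm h.symm)]
  have hGh_nonneg : ∀ m, 0 ≤ Gh m := fun m => by
    rw [hGh_eval m]; exact tsum_nonneg (hfGnn m)
  have hGh_le : ∀ m, Gh m ≤ (1 - w)⁻¹ := by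
    intro m
    rw [hGh_eval m]
    have h := Summable.tsum_le_tsum (hfGle m) (hSG m) hgeo
    rwa [tsum_geometric_of_lt_one hw0.le hw1] at h
  have hEh1 : 1 ≤ Eh := by
    rw [hEhdef]
    have h := Summable.le_tsum hSE 0 fun i _ => hfEnn i
    rwa [hfE0] at h
  -- transfer of the recurrences to the generating functions
  have hGsymm : ∀ m, Gh m = Gh (-m) := by
    intro m
    rw [hGh_eval m, hGh_eval (-m)]
    exact tsum_congr fun t => by simp only [hfG]; rw [RPAux.G_symm]
  have hGm1 : Gh (-1) = Gh 1 := by simpa using hGsymm (-1)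
  have hEeq : Eh = 1 + ((r*y*w + (1-r)*w) * Eh
      + ((1-r)*(1/2)*(z-1)*w) * Gh 1 + ((1-r)*(1/2)*(z-1)*w) * Gh (-1)) := by
    have hsplit : ∀ t : ℕ, fE (t+1) = (r*y*w + (1-r)*w) * fE t
        + ((1-r)*(1/2)*(z-1)*w) * fG 1 t + ((1-r)*(1/2)*(z-1)*w) * fG (-1) t := by
      intro t
      simp only [hfE, hfG]
      rw [RPAux.EE_succ]
      ring
    have hEeq' : ∑' t, fE t = 1 + ((r*y*w + (1-r)*w) * Eh
        + ((1-r)*(1/2)*(z-1)*w) * Gh 1 + ((1-r)*(1/2)*(z-1)*w) * Gh (-1)) := by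
      rw [Summable.tsum_eq_zero_add hSE, tsum_congr hsplit,
        RPAux.tsum3 _ _ _ _ _ _ hSE (hSG 1) (hSG (-1)), hfE0, ← hEhdef,
        ← hGh_eval 1, ← hGh_eval (-1)]
    exact hEhdef.trans hEeq'
  have hG0eq : Gh 0 = 1 + ((r*y*w) * Eh
      + ((1-r)*(1/2)*z*w) * Gh 1 + ((1-r)*(1/2)*z*w) * Gh (-1)) := by
    have hsplit : ∀ t : ℕ, fG 0 (t+1) = (r*y*w) * fE t
        + ((1-r)*(1/2)*z*w) * fG 1 t + ((1-r)*(1/2)*z*w) * fG (-1) t := by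
      intro t
      simp only [hfE, hfG]
      rw [RPAux.G_succ_zero]
      ring
    rw [hGh_eval 0, Summable.tsum_eq_zero_add (hSG 0), tsum_congr hsplit,
      RPAux.tsum3 _ _ _ _ _ _ hSE (hSG 1) (hSG (-1)), hfG00, ← hEhdef,
      ← hGh_eval 1, ← hGh_eval (-1)]
  have hGmeq : ∀ m : ℤ, m ≠ 0 → Gh m
      = ((1-r)*(1/2)*w) * Gh (m-1) + ((1-r)*(1/2)*w) * Gh (m+1) := by
    intro m hm
    have hsplit : ∀ t : ℕ, fG m (t+1)
        = ((1-r)*(1/2)*w) * fG (m-1) t + ((1-r)*(1/2)*w) * fG (m+1) t := by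
      intro t
      simp only [hfG]
      rw [RPAux.G_succ_ne r z y m hm]
      ring
    rw [hGh_eval m, Summable.tsum_eq_zero_add (hSG m), tsum_congr hsplit,
      RPAux.tsum2 _ _ _ _ (hSG (m-1)) (hSG (m+1)), hfGm0 m hm,
      ← hGh_eval (m-1), ← hGh_eval (m+1)]
    ring
  -- the bounded-solution argument : Gh 1 = lam * Gh 0
  have hrec2 : ∀ n : ℕ, v * Gh ((n:ℤ)+2) = 2 * Gh ((n:ℤ)+1) - v * Gh (n:ℤ) := by
    intro n
    have h := hGmeq ((n:ℤ)+1) (by omega)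
    rw [show (n:ℤ)+1-1 = (n:ℤ) by ring, show (n:ℤ)+1+1 = (n:ℤ)+2 by ring] at h
    linear_combination (-2) * h + (Gh (n:ℤ) + Gh ((n:ℤ)+2)) * hv
  obtain ⟨e, hedef⟩ : ∃ e : ℕ → ℝ,
      e = fun n : ℕ => Gh ((n:ℤ)+1) - lam * Gh (n:ℤ) := ⟨_, rfl⟩
  have herec : ∀ n, e (n+1) = (1/lam) * e n := by
    intro n
    have key : (v*lam) * (Gh ((n:ℤ)+2) - lam * Gh ((n:ℤ)+1))
        = v * (Gh ((n:ℤ)+1) - lam * Gh (n:ℤ)) := by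
      linear_combination lam * hrec2 n - Gh ((n:ℤ)+1) * hlamrel
    simp only [hedef]
    rw [show (((n+1:ℕ)):ℤ) = (n:ℤ)+1 by push_cast; ring,
      show (n:ℤ)+1+1 = (n:ℤ)+2 by ring]
    apply mul_left_cancel₀ (ne_of_gt (mul_pos hv0 hlam0))
    rw [key]
    field_simp
  have hebd : ∀ n, |e n| ≤ (1+lam) * (1-w)⁻¹ := by
    intro n
    have h1 := hGh_le ((n:ℤ)+1)
    have h2 := hGh_le (n:ℤ)
    have h3 := hGh_nonneg ((n:ℤ)+1)
    have h4 := hGh_nonneg (n:ℤ)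
    have h5 : lam * Gh (n:ℤ) ≤ lam * (1-w)⁻¹ := mul_le_mul_of_nonneg_left h2 hlam0.le
    have h6 : 0 ≤ lam * Gh (n:ℤ) := mul_nonneg hlam0.le h4
    have h7 : (0:ℝ) < (1-w)⁻¹ := inv_pos.mpr (by linarith)
    have h8 : (1+lam) * (1-w)⁻¹ = (1-w)⁻¹ + lam*(1-w)⁻¹ := by ring
    have h9 : (0:ℝ) ≤ lam * (1-w)⁻¹ := mul_nonneg hlam0.le h7.le
    simp only [hedef]
    rw [abs_le]
    constructor <;> linarith
  have he0 : e 0 = 0 := by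
    refine RPAux.geom_force (1/lam) ((1+lam)*(1-w)⁻¹) ?_ e herec hebd
    rw [lt_div_iff₀ hlam0]; linarith
  have hG1 : Gh 1 = lam * Gh 0 := by
    simp only [hedef] at he0
    norm_num at he0
    linarith
  -- final algebra
  have hwbv : wb = v := by rw [hwb, hv]
  have hρwb : ρ wb = ρv := by rw [hρ, hwbv, ← hsdef, hρvdef]
  have hZval : Z z wb = (1 - ρv) / ((1 - v) * (1 - z*ρv)) := by rw [hZ, hρwb, hwbv]
  have h1zρ : 0 < 1 - z*ρv := by
    have h := mul_le_of_le_one_left hρ0.le hz1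
    linarith
  have h1vpos : 0 < 1 - v := by linarith
  have hZpos : 0 < Z z wb := by
    rw [hZval]
    exact div_pos (by linarith) (mul_pos h1vpos h1zρ)
  rw [hGm1] at hEeq hG0eq
  have hE2 : Eh = 1 + r*y*w*Eh + v*Eh + v*(z-1)*(Gh 1) := by
    linear_combination hEeq - (Eh + (z-1)*Gh 1) * hv
  have hB : Gh 0 = 1 + r*y*w*Eh + v*z*(Gh 1) := by
    linear_combination hG0eq - (z*Gh 1) * hv
  have hEG : Eh * (1 - v) = Gh 0 * (1 - ρv) := by
    linear_combination hE2 - hB - v * hG1 + Gh 0 * hρveq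
  have hB2 : Gh 0 * (1 - z*ρv) = 1 + r*y*w*Eh := by
    linear_combination hB + v*z*hG1 - z*(Gh 0)*hρveq
  have hEZ : Eh * ((1-v)*(1-z*ρv)) = (1 - ρv) * (1 + r*y*w*Eh) := by
    linear_combination (1 - z*ρv)*hEG + (1-ρv)*hB2
  have hEZ2 : Eh = Z z wb * (1 + r*y*w*Eh) := by
    rw [hZval, div_mul_eq_mul_div, eq_comm, div_eq_iff (ne_of_gt (mul_pos h1vpos h1zρ))]
    linear_combination -hEZ
  have h1' : Eh * (1 - r*y*w*(Z z wb)) = Z z wb := by linear_combination hEZ2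
  have hEpos : 0 < Eh := by linarith
  have hden : 0 < 1 - r*y*w*(Z z wb) := by
    by_contra hcon
    push_neg at hcon
    have h := mul_nonpos_of_nonneg_of_nonpos hEpos.le hcon
    rw [h1'] at h
    linarith
  have hfinal : Z z wb / (1 - r*y*w*(Z z wb)) = Eh := by
    rw [eq_comm, eq_div_iff (ne_of_gt hden)]
    linear_combination h1'
  have hfun : (fun t : ℕ => w ^ t * expect r t fun ω => z ^ Ncross ω * y ^ Ndot ω) = fE := by
    rw [hfE]
    funext t
    rfl
  have hgoal : Z z wb / (1 - r * y * w * Z z wb) = ∑' t, fE t := by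
    rw [hfinal, hEhdef]
  rw [hfun, hgoal]
  exact hSE.hasSum
end

section
/- For every r ∈ (0,1), the mean total time spent at the origin by the reset Pólya walk grows linearly with amplitude A = √(r/(2−r)); that is, E[N×_t + N•_t]/t converges to √(r/(2−r)) as t → ∞ (equivalently, since E[N•_t] = r·t exactly for all t, E[N×_t]/t → √(r/(2−r)) − r). -/
open Finset Filter

open ResetPolya Filter
namespace ResetPolya
variable {r : ℝ}

noncomputable def w (r : ℝ) (b : Bool × Bool) : ℝ := (if b.1 then r else 1 - r) * (1/2)

lemma sum_w (r : ℝ) : ∑ b : Bool × Bool, w r b = 1 := by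
  simp [w, Fintype.sum_prod_type, Fintype.sum_bool]; ring

lemma wt_snoc {t : ℕ} (ω : Fin t → Bool × Bool) (b : Bool × Bool) :
    wt r (Fin.snoc ω b) = wt r ω * w r b := by
  unfold wt w; rw [Fin.prod_univ_castSucc]; simp

lemma pos_succ_of_lt {t : ℕ} (ω : Fin t → Bool × Bool) {k : ℕ} (h : k < t) :
    pos ω (k+1) = if (ω ⟨k,h⟩).1 then 0 else pos ω k + (if (ω ⟨k,h⟩).2 then 1 else -1) := by
  simp [pos, h]

lemma expect_succ {t : ℕ} (f : (Fin (t+1) → Bool × Bool) → ℝ) :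
    expect r (t+1) f = expect r t (fun ω => ∑ b : Bool × Bool, w r b * f (Fin.snoc ω b)) := by
  unfold expect
  rw [← Equiv.sum_comp (Fin.snocEquiv (fun _ => Bool × Bool)) (fun ω => wt r ω * f ω)]
  rw [Fintype.sum_prod_type, Finset.sum_comm]
  apply Finset.sum_congr rfl; intro ω _
  rw [Finset.mul_sum]
  apply Finset.sum_congr rfl; intro b _
  have : (Fin.snocEquiv (fun _ => Bool × Bool)) (b, ω) = Fin.snoc ω b := rfl
  rw [this, wt_snoc]; ring

lemma expect_zero_horizon (f : (Fin 0 → Bool × Bool) → ℝ) :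
    expect r 0 f = f (fun i => i.elim0) := by
  rw [expect]
  rw [Finset.sum_eq_single (fun i : Fin 0 => i.elim0)]
  · simp [wt]
  · intro b _ hb; exact absurd (funext fun i => i.elim0) hb
  · intro h; exact absurd (Finset.mem_univ _) h

lemma expect_one (t : ℕ) : expect r t (fun _ => (1:ℝ)) = 1 := by
  induction t with
  | zero => rw [expect_zero_horizon]
  | succ n ih => rw [expect_succ]; simpa [mul_one, sum_w] using ih

lemma expect_add {t : ℕ} (f g : (Fin t → Bool × Bool) → ℝ) :
    expect r t (fun ω => f ω + g ω) = expect r t f + expect r t g := by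
  simp [expect, mul_add, Finset.sum_add_distrib]

lemma expect_smul {t : ℕ} (c : ℝ) (f : (Fin t → Bool × Bool) → ℝ) :
    expect r t (fun ω => c * f ω) = c * expect r t f := by
  simp [expect, Finset.mul_sum, mul_left_comm]

lemma expect_const {t : ℕ} (c : ℝ) : expect r t (fun _ => c) = c := by
  have := expect_smul (r := r) (t := t) c (fun _ => 1)
  simpa [expect_one] using this

lemma expect_fin_sum {t m : ℕ} (f : Fin m → (Fin t → Bool × Bool) → ℝ) :
    expect r t (fun ω => ∑ i, f i ω) = ∑ i, expect r t (f i) := by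
  simp only [expect, Finset.mul_sum]
  exact Finset.sum_comm

lemma pos_castSucc {t : ℕ} (ω : Fin (t+1) → Bool × Bool) :
    ∀ k ≤ t, pos ω k = pos (fun i : Fin t => ω i.castSucc) k := by
  intro k hk
  induction k with
  | zero => rfl
  | succ k ih =>
    have hk' : k < t := hk
    rw [pos_succ_of_lt ω (Nat.lt_succ_of_lt hk'), pos_succ_of_lt _ hk',
      ih (le_of_lt hk')]
    rfl

lemma pos_snoc {t : ℕ} (ω : Fin t → Bool × Bool) (b : Bool × Bool) {k : ℕ} (hk : k ≤ t) :
    pos (Fin.snoc ω b) k = pos ω k := by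
  rw [pos_castSucc _ k hk]
  simp

lemma pos_snoc_succ {t : ℕ} (ω : Fin t → Bool × Bool) (b : Bool × Bool) :
    pos (Fin.snoc ω b) (t+1) = if b.1 then 0 else pos ω t + (if b.2 then 1 else -1) := by
  rw [pos_succ_of_lt _ (Nat.lt_succ_self t)]
  have h : (⟨t, Nat.lt_succ_self t⟩ : Fin (t+1)) = Fin.last t := rfl
  rw [h, Fin.snoc_last, pos_snoc ω b le_rfl]

/-- Distribution of the position. -/
noncomputable def Pr (r : ℝ) (n : ℕ) (x : ℤ) : ℝ :=
  expect r n (fun ω => if pos ω n = x then 1 else 0)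

/-- Simple random walk distribution. -/
noncomputable def qq : ℕ → ℤ → ℝ
  | 0, x => if x = 0 then 1 else 0
  | n+1, x => (qq n (x-1) + qq n (x+1)) / 2

lemma Pr_succ (n : ℕ) (x : ℤ) :
    Pr r (n+1) x = r * (if x = 0 then 1 else 0)
      + (1-r) * ((Pr r n (x-1) + Pr r n (x+1)) / 2) := by
  unfold Pr
  rw [expect_succ]
  have key : ∀ ω : Fin n → Bool × Bool,
      (∑ b : Bool × Bool, w r b * (if pos (Fin.snoc ω b) (n+1) = x then 1 else 0))
      = r * (if x = 0 then 1 else 0)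
        + (1-r)/2 * (if pos ω n = x - 1 then 1 else 0)
        + (1-r)/2 * (if pos ω n = x + 1 then 1 else 0) := by
    intro ω
    rw [Fintype.sum_prod_type]
    simp only [Fintype.sum_bool, pos_snoc_succ, w, if_true, Bool.false_eq_true, if_false]
    rw [if_congr (show ((0:ℤ) = x) ↔ (x = 0) from eq_comm) rfl rfl,
      if_congr (show (pos ω n + 1 = x) ↔ (pos ω n = x - 1) from by omega) rfl rfl,
      if_congr (show (pos ω n + -1 = x) ↔ (pos ω n = x + 1) from by omega) rfl rfl]
    ring
  simp only [key]
  rw [expect_add, expect_add, expect_const, expect_smul, expect_smul]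
  ring
lemma Pr_formula (n : ℕ) (x : ℤ) :
    Pr r n x = r * (∑ m ∈ Finset.range n, (1-r)^m * qq m x) + (1-r)^n * qq n x := by
  induction n generalizing x with
  | zero =>
    unfold Pr
    rw [expect_zero_horizon]
    simp only [Finset.range_zero, Finset.sum_empty, mul_zero, pow_zero, one_mul, zero_add, qq]
    have : pos (fun i : Fin 0 => i.elim0) 0 = 0 := rfl
    rw [this]
    rw [if_congr (show ((0:ℤ) = x) ↔ (x = 0) from eq_comm) rfl rfl]
  | succ n ih =>
    rw [Pr_succ, ih, ih, Finset.sum_range_succ']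
    have expand : ∀ m, (1-r)^(m+1) * qq (m+1) x
        = (1-r)/2 * ((1-r)^m * qq m (x-1)) + (1-r)/2 * ((1-r)^m * qq m (x+1)) := by
      intro m
      show (1-r)^(m+1) * ((qq m (x-1) + qq m (x+1)) / 2) = _
      rw [pow_succ]
      ring
    simp only [expand, Finset.sum_add_distrib, ← Finset.mul_sum]
    show _ = r * ((1-r)/2 * ∑ m ∈ Finset.range n, (1-r)^m * qq m (x-1)
        + (1-r)/2 * ∑ m ∈ Finset.range n, (1-r)^m * qq m (x+1)
        + (1-r)^0 * qq 0 x)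
      + ((1-r)/2 * ((1-r)^n * qq n (x-1)) + (1-r)/2 * ((1-r)^n * qq n (x+1)))
    rw [show qq 0 x = (if x = 0 then 1 else 0) from rfl]
    ring

lemma qq_nonneg (n : ℕ) (x : ℤ) : 0 ≤ qq n x := by
  induction n generalizing x with
  | zero => unfold qq; positivity
  | succ n ih =>
    have h1 := ih (x-1); have h2 := ih (x+1)
    show 0 ≤ (qq n (x-1) + qq n (x+1)) / 2
    linarith

lemma qq_le_one (n : ℕ) (x : ℤ) : qq n x ≤ 1 := by
  induction n generalizing x with
  | zero => unfold qq; split <;> norm_num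
  | succ n ih =>
    have h1 := ih (x-1); have h2 := ih (x+1)
    show (qq n (x-1) + qq n (x+1)) / 2 ≤ 1
    linarith

lemma qq_closed (n : ℕ) (x : ℤ) :
    qq n x = if Even (n + x.natAbs) then (n.choose ((n + x.natAbs)/2) : ℝ) / 2^n else 0 := by
  induction n generalizing x with
  | zero =>
    rcases eq_or_ne x 0 with h | h
    · simp [h, qq]
    · have hx : x.natAbs ≠ 0 := by omega
      rw [show qq 0 x = (if x = 0 then 1 else 0) from rfl, if_neg h]
      split_ifs with hpar
      · obtain ⟨c, hc⟩ := hpar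
        rw [Nat.choose_eq_zero_of_lt (by omega)]
        simp
      · rfl
  | succ n ih =>
    show (qq n (x-1) + qq n (x+1)) / 2 = _
    rw [ih, ih]
    by_cases hpar : (n + 1 + x.natAbs) % 2 = 0
    · have hp0 : Even (n + 1 + x.natAbs) := Nat.even_iff.mpr hpar
      have hp1 : Even (n + (x-1).natAbs) := Nat.even_iff.mpr (by omega)
      have hp2 : Even (n + (x+1).natAbs) := Nat.even_iff.mpr (by omega)
      rw [if_pos hp1, if_pos hp2, if_pos hp0]
      have hchoose : (n+1).choose ((n + 1 + x.natAbs)/2)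
          = n.choose ((n + (x-1).natAbs)/2) + n.choose ((n + (x+1).natAbs)/2) := by
        rcases lt_trichotomy x 0 with hx | hx | hx
        · rw [show (n + (x-1).natAbs)/2 = (n + 1 + x.natAbs)/2 from by omega,
            show (n + (x+1).natAbs)/2 = (n + 1 + x.natAbs)/2 - 1 from by omega]
          obtain ⟨j, hj⟩ : ∃ j, (n + 1 + x.natAbs)/2 = j + 1 := ⟨(n+1+x.natAbs)/2 - 1, by omega⟩
          rw [hj, Nat.add_sub_cancel, Nat.choose_succ_succ, Nat.add_comm]
        · subst hx
          simp only [Int.natAbs_zero, add_zero] at hpar ⊢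
          rw [show ((0:ℤ)-1).natAbs = 1 from rfl, show ((0:ℤ)+1).natAbs = 1 from rfl]
          obtain ⟨m, hm⟩ : ∃ m, n = 2*m+1 := ⟨n/2, by omega⟩
          subst hm
          rw [show (2*m+1+1)/2 = m + 1 from by omega, show (2*m+1+1) = (2*m+1)+1 from rfl,
            Nat.choose_succ_succ,
            (Nat.choose_symm_half m).symm]
        · rw [show (n + (x-1).natAbs)/2 = (n + 1 + x.natAbs)/2 - 1 from by omega,
            show (n + (x+1).natAbs)/2 = (n + 1 + x.natAbs)/2 from by omega]
          obtain ⟨j, hj⟩ : ∃ j, (n + 1 + x.natAbs)/2 = j + 1 := ⟨(n+1+x.natAbs)/2 - 1, by omega⟩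
          rw [hj, Nat.add_sub_cancel, Nat.choose_succ_succ]
      rw [hchoose]
      push_cast
      rw [pow_succ]
      ring
    · have hp0 : ¬ Even (n + 1 + x.natAbs) := by rw [Nat.even_iff]; omega
      have hp1 : ¬ Even (n + (x-1).natAbs) := by rw [Nat.even_iff]; omega
      have hp2 : ¬ Even (n + (x+1).natAbs) := by rw [Nat.even_iff]; omega
      rw [if_neg hp1, if_neg hp2, if_neg hp0]
      norm_num
lemma qq_even_zero (j : ℕ) : qq (2*j) 0 = (Nat.centralBinom j : ℝ) / 4^j := by
  rw [qq_closed]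
  have hev : Even (2*j + (0:ℤ).natAbs) := by
    simp only [Int.natAbs_zero, add_zero]; exact ⟨j, two_mul j⟩
  rw [if_pos hev]
  simp only [Int.natAbs_zero, add_zero]
  rw [show (2*j)/2 = j from by omega, ← Nat.centralBinom_eq_two_mul_choose,
    show (2:ℝ)^(2*j) = 4^j from by rw [pow_mul]; norm_num]

lemma qq_odd_zero (j : ℕ) : qq (2*j+1) 0 = 0 := by
  rw [qq_closed]
  rw [if_neg (by simp only [Int.natAbs_zero, add_zero]; rw [Nat.even_iff]; omega)]

lemma centralBinom_le (j : ℕ) : (Nat.centralBinom j : ℝ) ≤ 4^j := by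
  have h := qq_le_one (2*j) 0
  rw [qq_even_zero] at h
  rwa [div_le_one (by positivity)] at h

lemma conv_centralBinom (n : ℕ) :
    ∑ k ∈ Finset.range (n+1), (Nat.centralBinom k : ℝ) * Nat.centralBinom (n-k) = 4^n := by
  set c : ℕ → ℝ := fun k => (Nat.centralBinom k : ℝ) with hc
  have crec : ∀ k : ℕ, ((k:ℝ)+1) * c (k+1) = (4*k+2) * c k := by
    intro k
    have := Nat.succ_mul_centralBinom_succ k
    have : ((k+1) * Nat.centralBinom (k+1) : ℝ) = (2 * (2*k+1) * Nat.centralBinom k : ℝ) := by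
      exact_mod_cast congrArg (Nat.cast : ℕ → ℝ) this
    push_cast at this
    rw [hc]; push_cast; linarith
  have hA : ∀ m, 2 * (∑ k ∈ Finset.range (m+1), (k:ℝ) * (c k * c (m-k)))
      = m * ∑ k ∈ Finset.range (m+1), c k * c (m-k) := by
    intro m
    have h1 : (∑ k ∈ Finset.range (m+1), (k:ℝ) * (c k * c (m-k)))
        = ∑ k ∈ Finset.range (m+1), ((m:ℝ) - k) * (c k * c (m-k)) := by
      rw [← Finset.sum_range_reflect (fun k => (k:ℝ) * (c k * c (m-k))) (m+1)]
      apply Finset.sum_congr rfl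
      intro j hj
      rw [Finset.mem_range] at hj
      have hjm : j ≤ m := by omega
      rw [show m + 1 - 1 - j = m - j from by omega,
        show m - (m - j) = j from by omega]
      rw [show ((m - j : ℕ) : ℝ) = (m:ℝ) - j from by
        push_cast [Nat.cast_sub hjm]; ring]
      ring
    rw [two_mul]
    nth_rewrite 2 [h1]
    rw [← Finset.sum_add_distrib, Finset.mul_sum]
    apply Finset.sum_congr rfl
    intro j _
    ring
  have key : ∀ m, ∑ k ∈ Finset.range (m+2), c k * c (m+1-k)
      = 4 * ∑ k ∈ Finset.range (m+1), c k * c (m-k) := by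
    intro m
    set T := ∑ k ∈ Finset.range (m+1), c k * c (m-k) with hT
    set T' := ∑ k ∈ Finset.range (m+2), c k * c (m+1-k) with hT'
    have hshift : ∑ k ∈ Finset.range (m+2), (k:ℝ) * (c k * c (m+1-k))
        = ∑ j ∈ Finset.range (m+1), (4*(j:ℝ)+2) * (c j * c (m-j)) := by
      rw [Finset.sum_range_succ']
      simp only [Nat.cast_zero, zero_mul, add_zero]
      apply Finset.sum_congr rfl
      intro j _
      rw [show m + 1 - (j+1) = m - j from by omega]
      push_cast
      linear_combination c (m-j) * crec j
    have h2 : 2 * ∑ k ∈ Finset.range (m+2), (k:ℝ) * (c k * c (m+1-k)) = ((m:ℝ)+1) * T' := by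
      have := hA (m+1); push_cast at this ⊢; linarith [this]
    have h3 : 2 * ∑ k ∈ Finset.range (m+1), (k:ℝ) * (c k * c (m-k)) = (m:ℝ) * T := hA m
    have h4 : ∑ j ∈ Finset.range (m+1), (4*(j:ℝ)+2) * (c j * c (m-j))
        = 4 * (∑ k ∈ Finset.range (m+1), (k:ℝ) * (c k * c (m-k))) + 2 * T := by
      rw [hT, Finset.mul_sum, Finset.mul_sum, ← Finset.sum_add_distrib]
      apply Finset.sum_congr rfl
      intro j _
      ring
    have hm1 : ((m:ℝ)+1) ≠ 0 := by positivity
    have hTT : ((m:ℝ)+1) * T' = ((m:ℝ)+1) * (4 * T) := by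
      rw [← h2, hshift, h4]
      linarith [h3]
    exact mul_left_cancel₀ hm1 hTT
  induction n with
  | zero => simp [hc, Nat.centralBinom]
  | succ n ih => rw [key n, ih]; rw [pow_succ]; ring

lemma expect_pos_ind (t : ℕ) : ∀ n ≤ t, ∀ x : ℤ,
    expect r t (fun ω => if pos ω n = x then 1 else 0) = Pr r n x := by
  induction t with
  | zero =>
    intro n hn x
    interval_cases n
    rfl
  | succ t ih =>
    intro n hn x
    rcases Nat.eq_or_lt_of_le hn with h | h
    · subst h; rfl
    · have hn' : n ≤ t := by omega
      rw [expect_succ]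
      have key : ∀ ω : Fin t → Bool × Bool,
          (∑ b : Bool × Bool, w r b * (if pos (Fin.snoc ω b) n = x then 1 else 0))
          = (if pos ω n = x then 1 else 0) := by
        intro ω
        simp only [pos_snoc _ _ hn']
        rw [← Finset.sum_mul, sum_w, one_mul]
      simp only [key]
      exact ih n hn' x
lemma Ndot_cast {t : ℕ} (ω : Fin t → Bool × Bool) :
    (Ndot ω : ℝ) = ∑ k : Fin t, (if (ω k).1 then (1:ℝ) else 0) := by
  rw [Ndot, Finset.card_filter]
  push_cast
  apply Finset.sum_congr rfl
  intro k _
  by_cases h : (ω k).1 <;> simp [h]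

lemma exp_Ndot (t : ℕ) : expect r t (fun ω => (Ndot ω : ℝ)) = r * t := by
  induction t with
  | zero => rw [expect_zero_horizon]; simp [Ndot]
  | succ t ih =>
    rw [expect_succ]
    have key : ∀ ω : Fin t → Bool × Bool,
        (∑ b : Bool × Bool, w r b * ((Ndot (Fin.snoc ω b) : ℝ))) = (Ndot ω : ℝ) + r := by
      intro ω
      have hsnoc : ∀ b : Bool × Bool,
          (Ndot (Fin.snoc ω b) : ℝ) = (Ndot ω : ℝ) + (if b.1 then 1 else 0) := by
        intro b
        rw [Ndot_cast, Ndot_cast, Fin.sum_univ_castSucc]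
        simp
      simp only [hsnoc]
      rw [Fintype.sum_prod_type]
      simp only [Fintype.sum_bool, w, if_true, Bool.false_eq_true, if_false]
      ring
    simp only [key]
    rw [expect_add, expect_const, ih]
    push_cast
    ring

lemma NN_cast {t : ℕ} (ω : Fin t → Bool × Bool) :
    ((Ncross ω : ℝ) + (Ndot ω : ℝ)) = ∑ k : Fin t, (if pos ω (k.1+1) = 0 then (1:ℝ) else 0) := by
  rw [Ndot_cast, Ncross, Finset.card_filter]
  push_cast
  rw [← Finset.sum_add_distrib]
  apply Finset.sum_congr rfl
  intro k _
  have hpos : (ω k).1 = true → pos ω (k.1+1) = 0 := by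
    intro hb
    rw [pos_succ_of_lt ω k.isLt, show (⟨k.1, k.isLt⟩ : Fin t) = k from rfl, if_pos hb]
  by_cases hb : (ω k).1
  · simp [hb, hpos hb]
  · simp [hb]

lemma exp_NN (t : ℕ) :
    expect r t (fun ω => ((Ncross ω : ℝ) + (Ndot ω : ℝ)))
      = ∑ k ∈ Finset.range t, Pr r (k+1) 0 := by
  simp only [NN_cast]
  rw [expect_fin_sum]
  rw [← Fin.sum_univ_eq_sum_range (fun k => Pr r (k+1) 0) t]
  apply Finset.sum_congr rfl
  intro k _
  exact expect_pos_ind t (k.1+1) k.isLt 0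
end ResetPolya

open ResetPolya Filter
open scoped Topology

/-- The mean total time spent at the origin by the reset Pólya walk grows linearly
with amplitude `A = √(r/(2−r))`; moreover `E[N•_t] = r·t` exactly for all `t`. -/
theorem statement4 (r : ℝ) (hr : r ∈ Set.Ioo (0 : ℝ) 1) :
    (∀ t : ℕ, expect r t (fun ω => (Ndot ω : ℝ)) = r * t) ∧
    Tendsto (fun t : ℕ => expect r t (fun ω => ((Ncross ω : ℝ) + (Ndot ω : ℝ))) / t)
      atTop (nhds (Real.sqrt (r / (2 - r)))) := by
  obtain ⟨hr0, hr1⟩ := hr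
  refine ⟨fun t => exp_Ndot t, ?_⟩
  have hs0 : (0:ℝ) ≤ 1 - r := by linarith
  have hs1 : (1:ℝ) - r < 1 := by linarith
  have hsq1 : (1-r)^2 < 1 := by nlinarith
  have hsq0 : (0:ℝ) ≤ (1-r)^2 := sq_nonneg _
  -- the even-part series
  set y : ℝ := (1-r)^2 / 4 with hy
  set f : ℕ → ℝ := fun j => (Nat.centralBinom j : ℝ) * y^j with hf
  have hy0 : 0 ≤ y := by positivity
  have hf0 : ∀ j, 0 ≤ f j := fun j => by positivity
  have hfle : ∀ j, f j ≤ ((1-r)^2)^j := by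
    intro j
    have h1 : f j ≤ (4:ℝ)^j * y^j :=
      mul_le_mul_of_nonneg_right (centralBinom_le j) (pow_nonneg hy0 j)
    calc f j ≤ (4:ℝ)^j * y^j := h1
    _ = (4*y)^j := (mul_pow 4 y j).symm
    _ = ((1-r)^2)^j := by rw [hy]; ring_nf
  have hsum_f : Summable f :=
    Summable.of_nonneg_of_le hf0 hfle (summable_geometric_of_lt_one hsq0 hsq1)
  set S : ℝ := ∑' j, f j with hSdef
  have hS : HasSum f S := hsum_f.hasSum
  have hS0 : 0 ≤ S := tsum_nonneg hf0
  -- g : full series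
  set g : ℕ → ℝ := fun m => (1-r)^m * qq m 0 with hg
  have hgeven : (fun j => g (2*j)) = f := by
    funext j
    rw [hg, hf]
    simp only
    rw [qq_even_zero, hy, pow_mul]
    rw [div_pow]
    ring
  have hgodd : ∀ j, g (2*j+1) = 0 := by
    intro j; rw [hg]; simp only; rw [qq_odd_zero, mul_zero]
  have hgS : HasSum g S := by
    have he : HasSum (fun j => g (2*j)) S := hgeven ▸ hS
    have ho : HasSum (fun j => g (2*j+1)) 0 := by
      simp only [hgodd]; exact hasSum_zero
    simpa using he.even_add_odd ho
  -- convergence of Pr r n 0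
  have T1 : Tendsto (fun n => ∑ m ∈ Finset.range n, g m) atTop (𝓝 S) :=
    hgS.tendsto_sum_nat
  have T2 : Tendsto (fun n : ℕ => (1-r)^n * qq n 0) atTop (𝓝 0) := by
    apply squeeze_zero (fun n => mul_nonneg (by positivity) (qq_nonneg n 0))
      (fun n => ?_) (tendsto_pow_atTop_nhds_zero_of_lt_one hs0 hs1)
    calc (1-r)^n * qq n 0 ≤ (1-r)^n * 1 :=
      mul_le_mul_of_nonneg_left (qq_le_one n 0) (by positivity)
    _ = (1-r)^n := mul_one _
  have ha : Tendsto (fun n : ℕ => Pr r n 0) atTop (𝓝 (r * S)) := by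
    have : Tendsto (fun n : ℕ => r * (∑ m ∈ Finset.range n, g m) + (1-r)^n * qq n 0)
        atTop (𝓝 (r * S + 0)) := (T1.const_mul r).add T2
    rw [add_zero] at this
    apply this.congr
    intro n
    rw [Pr_formula]
  -- Cesàro
  have hces : Tendsto (fun t : ℕ => (∑ k ∈ Finset.range t, Pr r (k+1) 0) / t)
      atTop (𝓝 (r * S)) := by
    have hshift : Tendsto (fun n : ℕ => Pr r (n+1) 0) atTop (𝓝 (r * S)) :=
      ha.comp (tendsto_add_atTop_nat 1)
    exact hshift.cesaro.congr fun n => inv_mul_eq_div _ _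
  have hfinal : Tendsto (fun t : ℕ => expect r t (fun ω => ((Ncross ω : ℝ) + (Ndot ω : ℝ))) / t)
      atTop (𝓝 (r * S)) := by
    apply hces.congr
    intro t
    rw [exp_NN]
  -- identify the limit
  have h2r : (0:ℝ) < 2 - r := by linarith
  have hSS : S * S = (r * (2-r))⁻¹ := by
    have hnorm : Summable fun j => ‖f j‖ :=
      hsum_f.congr fun j => (Real.norm_of_nonneg (hf0 j)).symm
    have hcauchy : S * S = ∑' n, ∑ k ∈ Finset.range (n+1), f k * f (n-k) :=
      tsum_mul_tsum_eq_tsum_sum_range_of_summable_norm hnorm hnorm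
    have hinner : ∀ n : ℕ, ∑ k ∈ Finset.range (n+1), f k * f (n-k) = ((1-r)^2)^n := by
      intro n
      have step : ∀ k ∈ Finset.range (n+1),
          f k * f (n-k) = ((Nat.centralBinom k : ℝ) * Nat.centralBinom (n-k)) * y^n := by
        intro k hk
        rw [Finset.mem_range] at hk
        have hkn : k ≤ n := by omega
        rw [hf]
        simp only
        have hpow : y^k * y^(n-k) = y^n := by rw [← pow_add]; congr 1; omega
        linear_combination ((Nat.centralBinom k : ℝ) * (Nat.centralBinom (n-k) : ℝ)) * hpow
      rw [Finset.sum_congr rfl step, ← Finset.sum_mul, conv_centralBinom]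
      rw [show (4:ℝ)^n * y^n = (4*y)^n from (mul_pow 4 y n).symm]
      congr 1
      rw [hy]; ring
    rw [hcauchy]
    have : ∑' n : ℕ, ∑ k ∈ Finset.range (n+1), f k * f (n-k) = ∑' n : ℕ, ((1-r)^2)^n :=
      tsum_congr hinner
    rw [this, tsum_geometric_of_lt_one hsq0 hsq1]
    congr 1
    ring
  have hlim : r * S = Real.sqrt (r / (2-r)) := by
    have hrs : (r * S)^2 = r / (2-r) := by
      have : (r*S)^2 = r^2 * (S*S) := by ring
      rw [this, hSS]
      field_simp
    calc r * S = Real.sqrt ((r*S)^2) := (Real.sqrt_sq (by positivity)).symm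
    _ = Real.sqrt (r / (2-r)) := by rw [hrs]
  rwa [hlim] at hfinal
end

section
/- For every r ∈ (0,1) and every real w ∈ (0,1), writing w̆ = (1−r)w and ρ̃(w) = 1 − √(1−w²), the generating function of the first spontaneous return time T^{(r)} of the reset Pólya walk satisfies Σ_{τ≥1} w^τ · P(T^{(r)} = τ) = (1−w̆)·ρ̃(w̆) / (1 − w + r·w·ρ̃(w̆)). -/
open Finset Filter

open ResetPolya

namespace ResetPolya

/-- The event, for the reset Pólya walk with horizon `τ`, that the first spontaneous
return to the origin occurs exactly at time `τ`: step `τ` is a spontaneous return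
(reset indicator `false` and position `0`), and no earlier step is. -/
def FirstReturnAtEnd {τ : ℕ} (ω : Fin τ → Bool × Bool) : Prop :=
  ∀ k : Fin τ, (((ω k).1 = false ∧ pos ω (k.1 + 1) = 0) ↔ k.1 + 1 = τ)

end ResetPolya

namespace ResetPolyaAux

open scoped Classical

/-- partial sum of a ±1 path -/
def psum {n : ℕ} (s : Fin n → Bool) : ℕ → ℤ
  | 0 => 0
  | k + 1 => if h : k < n then psum s k + (if s ⟨k, h⟩ then 1 else -1) else psum s k

lemma psum_zero {n} (s : Fin n → Bool) : psum s 0 = 0 := rfl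

lemma psum_succ_of_lt {n} (s : Fin n → Bool) {k : ℕ} (h : k < n) :
    psum s (k+1) = psum s k + (if s ⟨k, h⟩ then 1 else -1) := by
  simp [psum, h]

lemma psum_succ_of_le {n} (s : Fin n → Bool) {k : ℕ} (h : n ≤ k) :
    psum s (k+1) = psum s k := by
  simp [psum, Nat.not_lt.2 h]

lemma psum_step_abs {n} (s : Fin n → Bool) (k : ℕ) :
    psum s k - 1 ≤ psum s (k+1) ∧ psum s (k+1) ≤ psum s k + 1 := by
  by_cases h : k < n
  · rw [psum_succ_of_lt s h]
    by_cases hs : s ⟨k, h⟩ <;> simp [hs] <;> omega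
  · rw [psum_succ_of_le s (Nat.not_lt.1 h)]; omega

/-- a path that never hits -1 stays nonnegative -/
lemma psum_nonneg_of_ne {n} (s : Fin n → Bool) {m : ℕ}
    (h : ∀ i, i < m → psum s i ≠ -1) : ∀ i, i < m → 0 ≤ psum s i := by
  intro i
  induction i with
  | zero => intro _; simp [psum_zero]
  | succ i ih =>
    intro hi
    have h1 := ih (by omega)
    have h2 := psum_step_abs s i
    have h3 := h (i+1) hi
    omega

/-- discrete IVT: a path from 0 reaching ≤ -2 hits -1 strictly before -/
lemma psum_hits_neg_one {n} (s : Fin n → Bool) {N : ℕ} (h : psum s N ≤ -2) :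
    ∃ k, k < N ∧ psum s (k+1) = -1 := by
  have hex : ∃ k, psum s k ≤ -1 := ⟨N, by omega⟩
  classical
  set k0 := Nat.find hex with hk0
  have hspec : psum s k0 ≤ -1 := Nat.find_spec hex
  have hk0N : k0 ≤ N := Nat.find_le (by omega)
  have hk0pos : k0 ≠ 0 := by
    intro h0
    rw [h0] at hspec; simp [psum_zero] at hspec
  obtain ⟨k, hk⟩ := Nat.exists_eq_succ_of_ne_zero hk0pos
  have hprev : ¬ psum s k ≤ -1 := by
    rw [hk0] at hk
    exact Nat.find_min hex (by omega)
  have hstep := psum_step_abs s k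
  have hfind : Nat.find hex ≤ N := Nat.find_le (by omega)
  have h2 : psum s (k+1) ≤ -1 := by
    have := hspec; rw [hk] at this; exact this
  exact ⟨k, by omega, by omega⟩

lemma psum_neg {n} (s : Fin n → Bool) (k : ℕ) :
    psum (fun i => !(s i)) k = - psum s k := by
  induction k with
  | zero => simp [psum_zero]
  | succ k ih =>
    by_cases h : k < n
    · rw [psum_succ_of_lt _ h, psum_succ_of_lt s h, ih]
      by_cases hs : s ⟨k, h⟩ <;> simp [hs] <;> ring
    · rw [psum_succ_of_le _ (Nat.not_lt.1 h), psum_succ_of_le s (Nat.not_lt.1 h), ih]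

lemma psum_cons {n} (x : Bool) (s : Fin n → Bool) (i : ℕ) :
    psum (Fin.cons x s) (i+1) = (if x then 1 else -1) + psum s i := by
  induction i with
  | zero =>
    rw [psum_succ_of_lt _ (Nat.succ_pos n)]
    simp [psum_zero, Fin.cons_zero]
  | succ i ih =>
    by_cases h : i < n
    · rw [psum_succ_of_lt _ (by omega : i+1 < n+1), ih, psum_succ_of_lt s h]
      have : (⟨i+1, by omega⟩ : Fin (n+1)) = (⟨i, h⟩ : Fin n).succ := rfl
      rw [this, Fin.cons_succ]
      ring
    · rw [psum_succ_of_le _ (by omega : n+1 ≤ i+1), ih, psum_succ_of_le s (by omega)]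

section Split
variable {α : Sort*} {j m : ℕ}

lemma append_apply_left (a : Fin j → α) (b : Fin m → α) {k : ℕ} (h : k < j) :
    Fin.append a b ⟨k, by omega⟩ = a ⟨k, h⟩ := by
  have : (⟨k, by omega⟩ : Fin (j + m)) = Fin.castAdd m ⟨k, h⟩ := rfl
  rw [this, Fin.append_left]

lemma append_apply_right (a : Fin j → α) (b : Fin m → α) {i : ℕ} (h : i < m) :
    Fin.append a b ⟨j + i, by omega⟩ = b ⟨i, h⟩ := by
  have : (⟨j + i, by omega⟩ : Fin (j + m)) = Fin.natAdd j ⟨i, h⟩ := rfl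
  rw [this, Fin.append_right]

end Split

/-- splitting equivalence -/
def splitEquiv (α : Type*) (j m : ℕ) : ((Fin j → α) × (Fin m → α)) ≃ (Fin (j + m) → α) where
  toFun p := Fin.append p.1 p.2
  invFun ω := (fun i => ω (Fin.castAdd m i), fun i => ω (Fin.natAdd j i))
  left_inv p := by
    ext i
    · simp [Fin.append_left]
    · simp [Fin.append_right]
  right_inv ω := by
    funext i
    induction i using Fin.addCases with
    | left i => simp [Fin.append_left]
    | right i => simp [Fin.append_right]

lemma sum_split {α : Type*} [Fintype α] (j m : ℕ) (F : (Fin (j + m) → α) → ℝ) :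
    ∑ ω : Fin (j + m) → α, F ω
      = ∑ a : Fin j → α, ∑ b : Fin m → α, F (Fin.append a b) := by
  rw [← Equiv.sum_comp (splitEquiv α j m) F, Fintype.sum_prod_type]
  rfl

/-- pairing equivalence for Bool × Bool valued paths -/
def pairEquiv (n : ℕ) : ((Fin n → Bool) × (Fin n → Bool)) ≃ (Fin n → Bool × Bool) where
  toFun p k := (p.1 k, p.2 k)
  invFun ω := (fun k => (ω k).1, fun k => (ω k).2)
  left_inv p := rfl
  right_inv ω := rfl

lemma sum_pair (n : ℕ) (F : (Fin n → Bool × Bool) → ℝ) :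
    ∑ ω : Fin n → Bool × Bool, F ω
      = ∑ c : Fin n → Bool, ∑ s : Fin n → Bool, F (fun k => (c k, s k)) := by
  rw [← Equiv.sum_comp (pairEquiv n) F, Fintype.sum_prod_type]
  rfl

lemma psum_append_left {j m : ℕ} (a : Fin j → Bool) (b : Fin m → Bool) {k : ℕ} (h : k ≤ j) :
    psum (Fin.append a b) k = psum a k := by
  induction k with
  | zero => rfl
  | succ k ih =>
    have hk : k < j := h
    rw [psum_succ_of_lt _ (by omega : k < j + m), psum_succ_of_lt a hk, ih (by omega),
      append_apply_left a b hk]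

lemma psum_append_right {j m : ℕ} (a : Fin j → Bool) (b : Fin m → Bool) {i : ℕ} (h : i ≤ m) :
    psum (Fin.append a b) (j + i) = psum a j + psum b i := by
  induction i with
  | zero => rw [Nat.add_zero, psum_append_left a b le_rfl, psum_zero, add_zero]
  | succ i ih =>
    have hi : i < m := h
    have : j + (i + 1) = (j + i) + 1 := by omega
    rw [this, psum_succ_of_lt _ (by omega : j + i < j + m), ih (by omega),
      psum_succ_of_lt b hi, append_apply_right a b hi]
    ring

/-- index of the first `true` in a boolean-valued predicate on `Fin t`, or `t` if none. -/
noncomputable def firstIdx {t : ℕ} (c : Fin t → Prop) : ℕ :=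
  Nat.find (⟨t, Or.inl rfl⟩ : ∃ k, k = t ∨ ∃ h : k < t, c ⟨k, h⟩)

lemma firstIdx_le {t : ℕ} (c : Fin t → Prop) : firstIdx c ≤ t :=
  Nat.find_le (Or.inl rfl)

lemma firstIdx_eq_iff_lt {t k : ℕ} (c : Fin t → Prop) (hk : k < t) :
    firstIdx c = k ↔ (c ⟨k, hk⟩ ∧ ∀ i (h : i < t), i < k → ¬ c ⟨i, h⟩) := by
  rw [firstIdx, Nat.find_eq_iff]
  constructor
  · rintro ⟨h1, h2⟩
    rcases h1 with h1 | ⟨h, hc⟩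
    · omega
    · refine ⟨hc, fun i hi hik hci => h2 i hik (Or.inr ⟨hi, hci⟩)⟩
  · rintro ⟨hc, h⟩
    exact ⟨Or.inr ⟨hk, hc⟩, fun i hik hP => by
      rcases hP with h1 | ⟨hi, hci⟩
      · omega
      · exact h i hi hik hci⟩

lemma firstIdx_eq_self_iff {t : ℕ} (c : Fin t → Prop) :
    firstIdx c = t ↔ ∀ i : Fin t, ¬ c i := by
  rw [firstIdx, Nat.find_eq_iff]
  constructor
  · rintro ⟨-, h2⟩ ⟨i, hi⟩ hci
    exact h2 i hi (Or.inr ⟨hi, hci⟩)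
  · intro h
    refine ⟨Or.inl rfl, fun i hit hP => ?_⟩
    rcases hP with h1 | ⟨hi, hci⟩
    · omega
    · exact h ⟨i, hi⟩ hci


/-- weighted count of paths satisfying a predicate -/
noncomputable def cw {n : ℕ} (P : (Fin n → Bool) → Prop) : ℝ :=
  ∑ s : Fin n → Bool, if P s then ((2:ℝ)⁻¹) ^ n else 0

lemma cw_nonneg {n} (P : (Fin n → Bool) → Prop) : 0 ≤ cw P := by
  apply Finset.sum_nonneg
  intro s _
  positivity

lemma cw_le_one {n} (P : (Fin n → Bool) → Prop) : cw P ≤ 1 := by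
  have : cw P ≤ ∑ _s : Fin n → Bool, ((2:ℝ)⁻¹) ^ n := by
    apply Finset.sum_le_sum
    intro s _
    by_cases h : P s <;> simp [h] <;> positivity
  refine this.trans ?_
  rw [Finset.sum_const, Finset.card_univ, Fintype.card_fun]
  simp [nsmul_eq_mul]

lemma sum_ite_prod_eq {j m : ℕ} (P : (Fin j → Bool) → Prop) (Q : (Fin m → Bool) → Prop) :
    (∑ a : Fin j → Bool, ∑ b : Fin m → Bool, if P a ∧ Q b then ((2:ℝ)⁻¹) ^ (j + m) else 0)
      = cw P * cw Q := by
  rw [cw, cw, Finset.sum_mul_sum]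
  apply Finset.sum_congr rfl
  intro a _
  apply Finset.sum_congr rfl
  intro b _
  by_cases hP : P a <;> by_cases hQ : Q b <;> simp [hP, hQ, pow_add]

lemma sum_partition {Ω : Type*} [Fintype Ω] (F : Ω → ℝ) (idx : Ω → ℕ) (N : ℕ)
    (h : ∀ ω, idx ω ≤ N) :
    ∑ ω, F ω = ∑ jj ∈ Finset.range (N+1), ∑ ω : Ω, if idx ω = jj then F ω else 0 := by
  rw [← Finset.sum_fiberwise_of_maps_to (g := idx) (t := Finset.range (N+1))
    (fun ω _ => Finset.mem_range.2 (by have := h ω; omega)) F]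
  apply Finset.sum_congr rfl
  intro jj _
  rw [Finset.sum_filter]

lemma sum_cons (n : ℕ) (F : (Fin (n+1) → Bool) → ℝ) :
    ∑ s : Fin (n+1) → Bool, F s = ∑ x : Bool, ∑ t : Fin n → Bool, F (Fin.cons x t) := by
  rw [← Equiv.sum_comp (Fin.consEquiv (fun _ => Bool)) F, Fintype.sum_prod_type]
  rfl

/-- first-passage-to-`-1` paths -/
def Gcond {n : ℕ} (t : Fin n → Bool) : Prop :=
  (∀ k : Fin n, 0 ≤ psum t k.1) ∧ psum t n = -1

/-- first-return-at-end paths -/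
def FRcond {n : ℕ} (s : Fin n → Bool) : Prop :=
  ∀ k : Fin n, (psum s (k.1 + 1) = 0 ↔ k.1 + 1 = n)

/-- paths avoiding the origin -/
def Qcond {n : ℕ} (s : Fin n → Bool) : Prop :=
  ∀ k : Fin n, psum s (k.1 + 1) ≠ 0

noncomputable def g (n : ℕ) : ℝ := cw (Gcond (n := n))
noncomputable def q (n : ℕ) : ℝ := cw (Qcond (n := n))
noncomputable def fq (n : ℕ) : ℝ := cw (FRcond (n := n))

noncomputable def f : ℕ → ℝ
  | 0 => 0
  | (n+1) => g n

lemma g_zero : g 0 = 0 := by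
  rw [g, cw]
  apply Finset.sum_eq_zero
  intro s _
  have : ¬ Gcond s := by
    rintro ⟨-, h2⟩
    rw [psum_zero] at h2
    norm_num at h2
  simp [this]

lemma g_nonneg (n : ℕ) : 0 ≤ g n := cw_nonneg _
lemma g_le_one (n : ℕ) : g n ≤ 1 := cw_le_one _
lemma q_nonneg (n : ℕ) : 0 ≤ q n := cw_nonneg _
lemma q_le_one (n : ℕ) : q n ≤ 1 := cw_le_one _
lemma f_nonneg (n : ℕ) : 0 ≤ f n := by
  cases n with
  | zero => simp [f]
  | succ n => simpa [f] using g_nonneg n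
lemma f_le_one (n : ℕ) : f n ≤ 1 := by
  cases n with
  | zero => simp [f]
  | succ n => simpa [f] using g_le_one n


/-- shifted condition for the tail of a first-passage path after an initial up-step -/
def Gcond2 {n : ℕ} (t : Fin n → Bool) : Prop :=
  (∀ k : Fin n, -1 ≤ psum t k.1) ∧ psum t n = -2

noncomputable def TG (n j : ℕ) : ℝ :=
  ∑ t : Fin n → Bool,
    if firstIdx (fun k : Fin n => psum t (k.1+1) = -1) = j ∧ Gcond2 t then ((2:ℝ)⁻¹)^n else 0

lemma TG_eval (j m : ℕ) : TG ((j+1)+m) j = g (j+1) * g m := by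
  rw [TG, sum_split (j+1) m]
  have key : ∀ (u : Fin (j+1) → Bool) (v : Fin m → Bool),
      ((firstIdx (fun k : Fin ((j+1)+m) => psum (Fin.append u v) (k.1+1) = -1) = j
          ∧ Gcond2 (Fin.append u v))
        ↔ (Gcond u ∧ Gcond v)) := by
    intro u v
    set t := Fin.append u v with ht
    constructor
    · rintro ⟨hidx, hG1, hG2⟩
      rw [firstIdx_eq_iff_lt _ (by omega : j < (j+1)+m)] at hidx
      obtain ⟨hhit, hmin⟩ := hidx
      have hu_end : psum u (j+1) = -1 := by
        rw [← psum_append_left u v (le_refl (j+1))]; exact hhit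
      have hu_ne : ∀ i, i < j+1 → psum u i ≠ -1 := by
        intro i hi
        cases i with
        | zero => rw [psum_zero]; norm_num
        | succ i' =>
          have h1 : psum u (i'+1) = psum t (i'+1) := by
            rw [ht, psum_append_left u v (by omega : i'+1 ≤ j+1)]
          rw [h1]
          exact hmin i' (by omega) (by omega)
      have hu_nonneg := psum_nonneg_of_ne u hu_ne
      refine ⟨⟨fun k => hu_nonneg k.1 k.2, hu_end⟩, ⟨fun k => ?_, ?_⟩⟩
      · have h1 := hG1 ⟨(j+1) + k.1, by omega⟩
        have h2 : psum t ((j+1) + k.1) = psum u (j+1) + psum v k.1 :=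
          psum_append_right u v (by omega)
        simp only at h1
        omega
      · have h2 : psum t ((j+1) + m) = psum u (j+1) + psum v m :=
          psum_append_right u v le_rfl
        omega
    · rintro ⟨⟨hu1, hu2⟩, ⟨hv1, hv2⟩⟩
      have hL : ∀ k, k ≤ j+1 → psum t k = psum u k := fun k hk => psum_append_left u v hk
      have hR : ∀ i, i ≤ m → psum t ((j+1) + i) = psum u (j+1) + psum v i :=
        fun i hi => psum_append_right u v hi
      refine ⟨?_, fun k => ?_, ?_⟩
      · rw [firstIdx_eq_iff_lt _ (by omega : j < (j+1)+m)]
        constructor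
        · rw [hL (j+1) le_rfl]; exact hu2
        · intro i hi hij
          have h1 : psum t (i+1) = psum u (i+1) := hL (i+1) (by omega)
          have h2 : (0:ℤ) ≤ psum u (i+1) := hu1 ⟨i+1, by omega⟩
          show ¬ psum t (i+1) = -1
          omega
      · rcases Nat.lt_or_ge k.1 (j+1) with hc | hc
        · have h1 : psum t k.1 = psum u k.1 := hL k.1 (by omega)
          have h2 : (0:ℤ) ≤ psum u k.1 := hu1 ⟨k.1, hc⟩
          omega
        · have hk : k.1 = (j+1) + (k.1 - (j+1)) := by omega
          have h1 : psum t ((j+1) + (k.1 - (j+1))) = psum u (j+1) + psum v (k.1 - (j+1)) :=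
            hR _ (by omega)
          have h2 : (0:ℤ) ≤ psum v (k.1 - (j+1)) := by
            rcases Nat.lt_or_ge (k.1 - (j+1)) m with hcc | hcc
            · exact hv1 ⟨k.1 - (j+1), hcc⟩
            · have hk2 : k.1 < (j+1) + m := k.2
              omega
          rw [hk, h1]
          omega
      · have h1 := hR m le_rfl
        omega
  calc ∑ u : Fin (j+1) → Bool, ∑ v : Fin m → Bool,
        (if firstIdx (fun k : Fin ((j+1)+m) => psum (Fin.append u v) (k.1+1) = -1) = j
            ∧ Gcond2 (Fin.append u v) then ((2:ℝ)⁻¹)^((j+1)+m) else 0)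
      = ∑ u : Fin (j+1) → Bool, ∑ v : Fin m → Bool,
        (if Gcond u ∧ Gcond v then ((2:ℝ)⁻¹)^((j+1)+m) else 0) := by
        apply Finset.sum_congr rfl; intro u _
        apply Finset.sum_congr rfl; intro v _
        rw [if_congr (key u v) rfl rfl]
    _ = g (j+1) * g m := sum_ite_prod_eq _ _

lemma Gcond_cons_false {n} (t : Fin n → Bool) : Gcond (Fin.cons false t) ↔ n = 0 := by
  constructor
  · rintro ⟨h1, -⟩
    by_contra hn
    have hn1 : 1 < n + 1 := by omega
    have h3 : (0:ℤ) ≤ psum (Fin.cons false t) (0+1) := h1 ⟨1, hn1⟩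
    have h2 : psum (Fin.cons false t) (0+1) = (if false then 1 else -1) + psum t 0 :=
      psum_cons false t 0
    rw [psum_zero] at h2
    norm_num at h2 h3
    omega
  · rintro rfl
    refine ⟨fun k => ?_, ?_⟩
    · have hk2 := k.2
      have hk0 : k.1 = 0 := by omega
      rw [hk0, psum_zero]
    · rw [psum_cons]
      simp [psum_zero]

lemma Gcond_cons_true {n} (t : Fin n → Bool) : Gcond (Fin.cons true t) ↔ Gcond2 t := by
  have hshift : ∀ i : ℕ, psum (Fin.cons true t) (i+1) = 1 + psum t i := by
    intro i; rw [psum_cons]; simp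
  constructor
  · rintro ⟨h1, h2⟩
    refine ⟨fun k => ?_, ?_⟩
    · have h3 : (0:ℤ) ≤ psum (Fin.cons true t) (k.1+1) := h1 ⟨k.1 + 1, by omega⟩
      rw [hshift k.1] at h3
      omega
    · rw [hshift n] at h2
      omega
  · rintro ⟨h1, h2⟩
    refine ⟨fun k => ?_, ?_⟩
    · cases hk : k.1 with
      | zero => simp [psum_zero]
      | succ i =>
        have hi : i < n := by have := k.2; omega
        have h4 : (-1:ℤ) ≤ psum t i := h1 ⟨i, hi⟩
        rw [hshift i]
        omega
    · rw [hshift n]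
      omega

lemma TG_none (n : ℕ) : TG n n = 0 := by
  rw [TG]
  apply Finset.sum_eq_zero
  intro t _
  have : ¬ (firstIdx (fun k : Fin n => psum t (k.1+1) = -1) = n ∧ Gcond2 t) := by
    rintro ⟨hidx, -, h2⟩
    rw [firstIdx_eq_self_iff] at hidx
    obtain ⟨k, hk, hhit⟩ := psum_hits_neg_one t (by omega : psum t n ≤ -2)
    exact hidx ⟨k, hk⟩ hhit
  simp [this]

lemma g_succ (n : ℕ) :
    g (n+1) = 2⁻¹ * ((if n = 0 then 1 else 0)
      + ∑ kl ∈ Finset.HasAntidiagonal.antidiagonal n, g kl.1 * g kl.2) := by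
  rw [g, cw, sum_cons, Fintype.sum_bool]
  have hfalse : (∑ t : Fin n → Bool, if Gcond (Fin.cons false t) then ((2:ℝ)⁻¹)^(n+1) else 0)
      = if n = 0 then 2⁻¹ else 0 := by
    cases n with
    | zero => simp [Gcond_cons_false]
    | succ n => simp [Gcond_cons_false]
  have htrue : (∑ t : Fin n → Bool, if Gcond (Fin.cons true t) then ((2:ℝ)⁻¹)^(n+1) else 0)
      = 2⁻¹ * ∑ kl ∈ Finset.HasAntidiagonal.antidiagonal n, g kl.1 * g kl.2 := by
    have h1 : ∀ t : Fin n → Bool, (if Gcond (Fin.cons true t) then ((2:ℝ)⁻¹)^(n+1) else 0)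
        = 2⁻¹ * (if Gcond2 t then ((2:ℝ)⁻¹)^n else 0) := by
      intro t
      rw [if_congr (Gcond_cons_true t) rfl rfl, pow_succ]
      by_cases h : Gcond2 t <;> simp [h] <;> ring
    rw [Finset.sum_congr rfl (fun t _ => h1 t), ← Finset.mul_sum]
    congr 1
    rw [sum_partition (fun t => if Gcond2 t then ((2:ℝ)⁻¹)^n else 0)
      (fun t => firstIdx (fun k : Fin n => psum t (k.1+1) = -1)) n (fun t => firstIdx_le _)]
    have hTG : ∀ jj, (∑ t : Fin n → Bool,
        if firstIdx (fun k : Fin n => psum t (k.1+1) = -1) = jj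
          then (if Gcond2 t then ((2:ℝ)⁻¹)^n else 0) else 0) = TG n jj := by
      intro jj
      rw [TG]
      apply Finset.sum_congr rfl
      intro t _
      by_cases h1 : firstIdx (fun k : Fin n => psum t (k.1+1) = -1) = jj
        <;> by_cases h2 : Gcond2 t <;> simp [h1, h2]
    rw [Finset.sum_congr rfl (fun jj _ => hTG jj), Finset.sum_range_succ, TG_none, add_zero]
    have hstep : ∀ jj ∈ Finset.range n, TG n jj = g (jj+1) * g (n - (jj+1)) := by
      intro jj hjj
      rw [Finset.mem_range] at hjj
      have hn : n = (jj+1) + (n - (jj+1)) := by omega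
      rw [show TG n jj = TG ((jj+1) + (n - (jj+1))) jj from by rw [← hn]]
      exact TG_eval jj (n - (jj+1))
    rw [Finset.sum_congr rfl hstep]
    rw [Finset.Nat.sum_antidiagonal_eq_sum_range_succ_mk, Finset.sum_range_succ']
    simp [g_zero]
  rw [htrue, hfalse]
  by_cases hn : n = 0 <;> simp [hn] <;> ring

lemma cw_true (m : ℕ) : cw (fun _ : Fin m → Bool => True) = 1 := by
  rw [cw]
  simp only [if_pos trivial]
  rw [Finset.sum_const, Finset.card_univ, Fintype.card_fun]
  simp [nsmul_eq_mul]

/-- negation equivalence -/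
def negEquiv (n : ℕ) : (Fin n → Bool) ≃ (Fin n → Bool) :=
  Function.Involutive.toPerm (fun t => fun i => !(t i)) (by
    intro t; funext i; simp)

lemma fq_succ (n : ℕ) : fq (n+1) = g n := by
  have cond_true : ∀ t : Fin n → Bool, FRcond (Fin.cons true t) ↔ Gcond t := by
    intro t
    have hshift : ∀ i : ℕ, psum (Fin.cons true t) (i+1) = 1 + psum t i := by
      intro i; rw [psum_cons]; simp
    constructor
    · intro h
      have hne : ∀ i, i < n → psum t i ≠ -1 := by
        intro i hi hv
        have h2 : psum (Fin.cons true t) (i+1) = 0 ↔ i+1 = n+1 := h ⟨i, by omega⟩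
        rw [hshift i] at h2
        have h3 := h2.1 (by omega)
        omega
      refine ⟨fun k => psum_nonneg_of_ne t hne k.1 k.2, ?_⟩
      have h2 : psum (Fin.cons true t) (n+1) = 0 ↔ n+1 = n+1 := h ⟨n, by omega⟩
      rw [hshift n] at h2
      have h3 := h2.2 rfl
      omega
    · rintro ⟨h1, h2⟩ k
      rw [show psum (Fin.cons true t) (k.1+1) = 1 + psum t k.1 from hshift k.1]
      rcases Nat.lt_or_ge k.1 n with hc | hc
      · have h3 : (0:ℤ) ≤ psum t k.1 := h1 ⟨k.1, hc⟩
        constructor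
        · intro hv; omega
        · intro hv; omega
      · have hk : k.1 = n := by have := k.2; omega
        rw [hk]
        constructor
        · intro _; rfl
        · intro _; omega
  have cond_false : ∀ t : Fin n → Bool,
      (FRcond (Fin.cons false t) ↔ Gcond (fun i => !(t i))) := by
    intro t
    have hshift : ∀ i : ℕ, psum (Fin.cons false t) (i+1) = -1 + psum t i := by
      intro i; rw [psum_cons]; simp
    have hneg : ∀ i, psum (fun k => !(t k)) i = - psum t i := psum_neg t
    constructor
    · intro h
      have hne : ∀ i, i < n → psum (fun k => !(t k)) i ≠ -1 := by
        intro i hi hv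
        rw [hneg i] at hv
        have h2 : psum (Fin.cons false t) (i+1) = 0 ↔ i+1 = n+1 := h ⟨i, by omega⟩
        rw [hshift i] at h2
        have h3 := h2.1 (by omega)
        omega
      refine ⟨fun k => psum_nonneg_of_ne _ hne k.1 k.2, ?_⟩
      have h2 : psum (Fin.cons false t) (n+1) = 0 ↔ n+1 = n+1 := h ⟨n, by omega⟩
      rw [hshift n] at h2
      have h3 := h2.2 rfl
      rw [hneg n]
      omega
    · rintro ⟨h1, h2⟩ k
      rw [show psum (Fin.cons false t) (k.1+1) = -1 + psum t k.1 from hshift k.1]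
      rw [hneg n] at h2
      rcases Nat.lt_or_ge k.1 n with hc | hc
      · have h3 : (0:ℤ) ≤ psum (fun i => !(t i)) k.1 := h1 ⟨k.1, hc⟩
        rw [hneg k.1] at h3
        constructor
        · intro hv; omega
        · intro hv; omega
      · have hk : k.1 = n := by have := k.2; omega
        rw [hk]
        constructor
        · intro _; rfl
        · intro _; omega
  rw [fq, cw, sum_cons, Fintype.sum_bool]
  have htrue : (∑ t : Fin n → Bool, if FRcond (Fin.cons true t) then ((2:ℝ)⁻¹)^(n+1) else 0)
      = 2⁻¹ * g n := by
    rw [g, cw, Finset.mul_sum]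
    apply Finset.sum_congr rfl
    intro t _
    rw [if_congr (cond_true t) rfl rfl, pow_succ]
    by_cases h : Gcond t <;> simp [h] <;> ring
  have hfalse : (∑ t : Fin n → Bool, if FRcond (Fin.cons false t) then ((2:ℝ)⁻¹)^(n+1) else 0)
      = 2⁻¹ * g n := by
    have step1 : ∀ t : Fin n → Bool,
        (if FRcond (Fin.cons false t) then ((2:ℝ)⁻¹)^(n+1) else 0)
        = 2⁻¹ * (if Gcond (fun i => !(t i)) then ((2:ℝ)⁻¹)^n else 0) := by
      intro t
      rw [if_congr (cond_false t) rfl rfl, pow_succ]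
      by_cases h : Gcond (fun i => !(t i)) <;> simp [h] <;> ring
    rw [Finset.sum_congr rfl (fun t _ => step1 t), ← Finset.mul_sum]
    congr 1
    rw [g, cw]
    exact Equiv.sum_comp (negEquiv n) (fun s => if Gcond s then ((2:ℝ)⁻¹)^n else 0)
  rw [htrue, hfalse]
  ring

noncomputable def TQ (n j : ℕ) : ℝ :=
  ∑ s : Fin n → Bool,
    if firstIdx (fun k : Fin n => psum s (k.1+1) = 0) = j then ((2:ℝ)⁻¹)^n else 0

lemma TQ_none (n : ℕ) : TQ n n = q n := by
  rw [TQ, q, cw]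
  apply Finset.sum_congr rfl
  intro s _
  have : (firstIdx (fun k : Fin n => psum s (k.1+1) = 0) = n) ↔ Qcond s := by
    rw [firstIdx_eq_self_iff]
    constructor
    · intro h k hv; exact h k hv
    · intro h k hv; exact h k hv
  rw [if_congr this rfl rfl]

lemma TQ_eval (j m : ℕ) : TQ ((j+1)+m) j = fq (j+1) := by
  rw [TQ, sum_split (j+1) m]
  have key : ∀ (u : Fin (j+1) → Bool) (v : Fin m → Bool),
      (firstIdx (fun k : Fin ((j+1)+m) => psum (Fin.append u v) (k.1+1) = 0) = j
        ↔ (FRcond u ∧ True)) := by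
    intro u v
    set s := Fin.append u v with hs
    rw [firstIdx_eq_iff_lt _ (by omega : j < (j+1)+m)]
    have hL : ∀ k, k ≤ j+1 → psum s k = psum u k := fun k hk => psum_append_left u v hk
    constructor
    · rintro ⟨hhit, hmin⟩
      refine ⟨fun k => ?_, trivial⟩
      rcases Nat.lt_or_ge k.1 j with hc | hc
      · constructor
        · intro hv
          have h4 : psum s (k.1+1) = 0 := by rw [hL (k.1+1) (by omega)]; exact hv
          exact absurd h4 (hmin k.1 (by omega) hc)
        · intro hv; omega
      · have hk : k.1 = j := by have := k.2; omega
        rw [hk]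
        have h2 : psum u (j+1) = 0 := by rw [← hL (j+1) le_rfl]; exact hhit
        constructor
        · intro _; rfl
        · intro _; exact h2
    · rintro ⟨h, -⟩
      constructor
      · show psum s (j+1) = 0
        rw [hL (j+1) le_rfl]
        exact (h ⟨j, by omega⟩).2 rfl
      · intro i hi hij
        show ¬ psum s (i+1) = 0
        rw [hL (i+1) (by omega)]
        intro hv
        have h5 : psum u (i+1) = 0 ↔ i+1 = j+1 := h ⟨i, by omega⟩
        have h6 := h5.1 hv
        omega
  calc ∑ u : Fin (j+1) → Bool, ∑ v : Fin m → Bool,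
        (if firstIdx (fun k : Fin ((j+1)+m) => psum (Fin.append u v) (k.1+1) = 0) = j
          then ((2:ℝ)⁻¹)^((j+1)+m) else 0)
      = ∑ u : Fin (j+1) → Bool, ∑ v : Fin m → Bool,
        (if FRcond u ∧ True then ((2:ℝ)⁻¹)^((j+1)+m) else 0) := by
        apply Finset.sum_congr rfl; intro u _
        apply Finset.sum_congr rfl; intro v _
        rw [if_congr (key u v) rfl rfl]
    _ = fq (j+1) := by
        have h := sum_ite_prod_eq (FRcond (n := j+1)) (fun _ : Fin m → Bool => True)
        rw [cw_true, mul_one] at h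
        rw [show fq (j+1) = cw (FRcond (n := j+1)) from rfl, ← h]
        apply Finset.sum_congr rfl; intro u _
        apply Finset.sum_congr rfl; intro v _
        by_cases hF : FRcond u <;> simp [hF]

lemma qrec (n : ℕ) : q n + ∑ j ∈ Finset.range n, fq (j+1) = 1 := by
  have h1 : (1:ℝ) = ∑ s : Fin n → Bool, ((2:ℝ)⁻¹)^n := by
    rw [Finset.sum_const, Finset.card_univ, Fintype.card_fun]
    simp [nsmul_eq_mul]
  rw [h1, sum_partition (fun _ => ((2:ℝ)⁻¹)^n)
    (fun s => firstIdx (fun k : Fin n => psum s (k.1+1) = 0)) n (fun s => firstIdx_le _)]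
  have hTQ : ∀ jj, (∑ s : Fin n → Bool,
      if firstIdx (fun k : Fin n => psum s (k.1+1) = 0) = jj then ((2:ℝ)⁻¹)^n else 0)
      = TQ n jj := fun jj => rfl
  rw [Finset.sum_congr rfl (fun jj _ => hTQ jj), Finset.sum_range_succ, TQ_none]
  have hstep : ∀ jj ∈ Finset.range n, TQ n jj = fq (jj+1) := by
    intro jj hjj
    rw [Finset.mem_range] at hjj
    have hn : n = (jj+1) + (n - (jj+1)) := by omega
    rw [show TQ n jj = TQ ((jj+1) + (n - (jj+1))) jj from by rw [← hn]]
    exact TQ_eval jj (n - (jj+1))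
  rw [Finset.sum_congr rfl hstep]
  ring

section Reset
open ResetPolya

variable {r : ℝ}

lemma pos_succ_of_lt {t : ℕ} (ω : Fin t → Bool × Bool) {k : ℕ} (h : k < t) :
    pos ω (k+1) = if (ω ⟨k, h⟩).1 then 0
      else pos ω k + (if (ω ⟨k, h⟩).2 then 1 else -1) := by
  simp [pos, h]

lemma pos_succ_of_le {t : ℕ} (ω : Fin t → Bool × Bool) {k : ℕ} (h : t ≤ k) :
    pos ω (k+1) = pos ω k := by
  simp [pos, Nat.not_lt.2 h]

lemma pos_append_left {j m : ℕ} (a : Fin j → Bool × Bool) (b : Fin m → Bool × Bool)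
    {k : ℕ} (h : k ≤ j) : pos (Fin.append a b) k = pos a k := by
  induction k with
  | zero => rfl
  | succ k ih =>
    have hk : k < j := h
    rw [pos_succ_of_lt _ (show k < j + m by omega), pos_succ_of_lt a hk, ih (by omega),
      append_apply_left a b hk]

lemma pos_reset {t : ℕ} (ω : Fin t → Bool × Bool) {k : ℕ} (h : k < t)
    (hres : (ω ⟨k, h⟩).1 = true) : pos ω (k+1) = 0 := by
  rw [pos_succ_of_lt ω h, hres]
  simp

lemma pos_append_right {j m : ℕ} (a : Fin j → Bool × Bool) (b : Fin m → Bool × Bool)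
    (h0 : pos a j = 0) {i : ℕ} (h : i ≤ m) :
    pos (Fin.append a b) (j + i) = pos b i := by
  induction i with
  | zero => rw [Nat.add_zero, pos_append_left a b le_rfl, h0]; rfl
  | succ i ih =>
    have hi : i < m := h
    rw [show j + (i+1) = (j+i)+1 by omega, pos_succ_of_lt _ (show j + i < j + m by omega),
      append_apply_right a b hi, ih (by omega), pos_succ_of_lt b hi]

lemma pos_eq_psum {t : ℕ} (ω : Fin t → Bool × Bool) (k : ℕ)
    (h : ∀ i (hi : i < t), i < k → (ω ⟨i, hi⟩).1 = false) :
    pos ω k = psum (fun i => (ω i).2) k := by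
  induction k with
  | zero => rfl
  | succ k ih =>
    by_cases hk : k < t
    · rw [pos_succ_of_lt ω hk, h k hk (by omega), psum_succ_of_lt _ hk,
        ih (fun i hi hik => h i hi (by omega))]
      simp
    · rw [pos_succ_of_le ω (Nat.not_lt.1 hk), psum_succ_of_le _ (Nat.not_lt.1 hk),
        ih (fun i hi hik => h i hi (by omega))]

lemma wt_append {j m : ℕ} (a : Fin j → Bool × Bool) (b : Fin m → Bool × Bool) :
    wt r (Fin.append a b) = wt r a * wt r b := by
  rw [wt, wt, wt, Fin.prod_univ_add]
  congr 1
  · apply Finset.prod_congr rfl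
    intro i _
    rw [Fin.append_left]
  · apply Finset.prod_congr rfl
    intro i _
    rw [Fin.append_right]

lemma wt_pair {t : ℕ} (c s : Fin t → Bool) :
    wt r (fun k => (c k, s k)) = (∏ k, if c k then r else 1-r) * ((2:ℝ)⁻¹)^t := by
  rw [wt, Finset.prod_mul_distrib]
  congr 1
  rw [Finset.prod_const, Finset.card_univ, Fintype.card_fin]
  norm_num

lemma sum_wt (t : ℕ) : ∑ ω : Fin t → Bool × Bool, wt r ω = 1 := by
  have h1 : ∑ y : Bool × Bool, ((if y.1 then r else 1-r) * (1/2 : ℝ)) = 1 := by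
    rw [Fintype.sum_prod_type, Fintype.sum_bool]
    simp
    ring
  have h2 := Finset.prod_univ_sum (fun _ : Fin t => (Finset.univ : Finset (Bool × Bool)))
    (fun _ y => (if y.1 then r else 1-r) * (1/2 : ℝ))
  rw [Fintype.piFinset_univ] at h2
  calc ∑ ω : Fin t → Bool × Bool, wt r ω
      = ∑ x : Fin t → Bool × Bool, ∏ k : Fin t, ((if (x k).1 then r else 1-r) * (1/2 : ℝ)) := rfl
    _ = ∏ _k : Fin t, ∑ y : Bool × Bool, ((if y.1 then r else 1-r) * (1/2 : ℝ)) := h2.symm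
    _ = 1 := by rw [Finset.prod_congr rfl (fun k _ => h1)]; simp

lemma wt_nonneg (hr0 : 0 ≤ r) (hr1 : r ≤ 1) {t : ℕ} (ω : Fin t → Bool × Bool) :
    0 ≤ wt r ω := by
  apply Finset.prod_nonneg
  intro k _
  have : (0:ℝ) ≤ if (ω k).1 then r else 1 - r := by
    by_cases h : (ω k).1 <;> simp [h] <;> linarith
  positivity

lemma prob_eq {t : ℕ} (E : (Fin t → Bool × Bool) → Prop) :
    prob r t E = ∑ ω : Fin t → Bool × Bool, if E ω then wt r ω else 0 := by
  unfold ResetPolya.prob ResetPolya.expect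
  apply Finset.sum_congr rfl
  intro ω _
  by_cases h : E ω <;> simp [h]

lemma prob_nonneg (hr0 : 0 ≤ r) (hr1 : r ≤ 1) {t : ℕ} (E : (Fin t → Bool × Bool) → Prop) :
    0 ≤ prob r t E := by
  rw [prob_eq]
  apply Finset.sum_nonneg
  intro ω _
  by_cases h : E ω <;> simp [h, wt_nonneg hr0 hr1]

lemma prob_le_one (hr0 : 0 ≤ r) (hr1 : r ≤ 1) {t : ℕ} (E : (Fin t → Bool × Bool) → Prop) :
    prob r t E ≤ 1 := by
  rw [prob_eq]
  calc ∑ ω : Fin t → Bool × Bool, (if E ω then wt r ω else 0)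
      ≤ ∑ ω : Fin t → Bool × Bool, wt r ω := by
        apply Finset.sum_le_sum
        intro ω _
        by_cases h : E ω <;> simp [h, wt_nonneg hr0 hr1]
    _ = 1 := sum_wt t

/-- first-return probability sequence, with value 0 at time 0 -/
noncomputable def abar (r : ℝ) : ℕ → ℝ
  | 0 => 0
  | (n+1) => prob r (n+1) FirstReturnAtEnd

/-- renewal kernel -/
noncomputable def dker (r : ℝ) : ℕ → ℝ
  | 0 => 0
  | (j+1) => r * (1-r)^j * q j

noncomputable def S (r : ℝ) (t jj : ℕ) : ℝ :=
  ∑ ω : Fin t → Bool × Bool,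
    if firstIdx (fun k : Fin t => (ω k).1 = true) = jj ∧ FirstReturnAtEnd ω
      then wt r ω else 0

lemma sum_sum_ite_mul {α β : Type*} [Fintype α] [Fintype β] (P : α → Prop) (Q : β → Prop)
    (F : α → ℝ) (G : β → ℝ) :
    (∑ a : α, ∑ b : β, if P a ∧ Q b then F a * G b else 0)
      = (∑ a : α, if P a then F a else 0) * (∑ b : β, if Q b then G b else 0) := by
  rw [Finset.sum_mul_sum]
  apply Finset.sum_congr rfl
  intro a _
  apply Finset.sum_congr rfl
  intro b _
  by_cases hP : P a <;> by_cases hQ : Q b <;> simp [hP, hQ]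

lemma prob_partition (t : ℕ) :
    prob r t FirstReturnAtEnd = ∑ jj ∈ Finset.range (t+1), S r t jj := by
  rw [prob_eq]
  rw [sum_partition (fun ω => if FirstReturnAtEnd ω then wt r ω else 0)
    (fun ω => firstIdx (fun k : Fin t => (ω k).1 = true)) t (fun ω => firstIdx_le _)]
  apply Finset.sum_congr rfl
  intro jj _
  rw [S]
  apply Finset.sum_congr rfl
  intro ω _
  by_cases h1 : firstIdx (fun k : Fin t => (ω k).1 = true) = jj
    <;> by_cases h2 : FirstReturnAtEnd ω <;> simp [h1, h2]

end Reset

section Reset2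
open ResetPolya

variable {r : ℝ}

lemma S_none (t : ℕ) : S r t t = (1-r)^t * fq t := by
  rw [S, sum_pair t]
  have key : ∀ c s : Fin t → Bool,
      ((firstIdx (fun k : Fin t => ((fun k => (c k, s k)) k).1 = true) = t
          ∧ FirstReturnAtEnd (fun k => (c k, s k)))
        ↔ ((c = fun _ => false) ∧ FRcond s)) := by
    intro c s
    rw [firstIdx_eq_self_iff]
    constructor
    · rintro ⟨hall, hFR⟩
      have hc : c = fun _ => false := by
        funext i
        have := hall i
        simpa using this
      refine ⟨hc, fun k => ?_⟩
      have hpos : pos (fun k => (c k, s k)) (k.1+1) = psum s (k.1+1) := by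
        apply pos_eq_psum
        intro i hi _
        have := hall ⟨i, hi⟩
        simpa using this
      have h2 := hFR k
      rw [hpos] at h2
      have hck : c k = false := by rw [hc]
      constructor
      · intro hv
        exact h2.1 ⟨hck, hv⟩
      · intro hv
        exact (h2.2 hv).2
    · rintro ⟨hc, hFR⟩
      subst hc
      constructor
      · intro i
        simp
      · intro k
        have hpos : pos (fun k => ((false : Bool), s k)) (k.1+1) = psum s (k.1+1) := by
          apply pos_eq_psum
          intro i hi _
          rfl
        have h2 := hFR k
        constructor
        · rintro ⟨-, hv⟩
          rw [hpos] at hv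
          exact h2.1 hv
        · intro hv
          exact ⟨rfl, by rw [hpos]; exact h2.2 hv⟩
  calc ∑ c : Fin t → Bool, ∑ s : Fin t → Bool,
        (if firstIdx (fun k : Fin t => ((fun k => (c k, s k)) k).1 = true) = t
            ∧ FirstReturnAtEnd (fun k => (c k, s k))
          then wt r (fun k => (c k, s k)) else 0)
      = ∑ c : Fin t → Bool, ∑ s : Fin t → Bool,
        (if (c = fun _ => false) ∧ FRcond s
          then (∏ k, if c k then r else 1-r) * ((2:ℝ)⁻¹)^t else 0) := by
        apply Finset.sum_congr rfl; intro c _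
        apply Finset.sum_congr rfl; intro s _
        rw [if_congr (key c s) (wt_pair c s) rfl]
    _ = (∑ c : Fin t → Bool, if c = (fun _ => false) then (∏ k, if c k then r else 1-r) else 0)
          * (∑ s : Fin t → Bool, if FRcond s then ((2:ℝ)⁻¹)^t else 0) :=
        by
        rw [Finset.sum_mul_sum]
        apply Finset.sum_congr rfl; intro c _
        apply Finset.sum_congr rfl; intro s _
        by_cases h1 : c = (fun _ => false) <;> by_cases h2 : FRcond s <;> simp [h1, h2]
    _ = (1-r)^t * fq t := by
        rw [Finset.sum_ite_eq' Finset.univ (fun _ => false)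
          (fun c => ∏ k, if c k then r else 1-r)]
        simp only [Finset.mem_univ, if_pos, if_neg]
        congr 1
        rw [Finset.prod_congr rfl (fun k _ => by simp : ∀ k ∈ Finset.univ,
          (if (fun _ : Fin t => false) k then r else 1-r) = 1-r)]
        rw [Finset.prod_const, Finset.card_univ, Fintype.card_fin]

/-- the head condition for the first-reset decomposition -/
def Acond (j : ℕ) (a : Fin (j+1) → Bool × Bool) : Prop :=
  (a ⟨j, by omega⟩).1 = true
    ∧ (∀ i (h : i < j+1), i < j → (a ⟨i, h⟩).1 = false)
    ∧ (∀ k, k < j → psum (fun i => (a i).2) (k+1) ≠ 0)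

lemma SA_eval (j : ℕ) :
    (∑ a : Fin (j+1) → Bool × Bool, if Acond j a then wt r a else 0)
      = r * (1-r)^j * q j := by
  rw [sum_pair (j+1)]
  set pat : Fin (j+1) → Bool := fun i => decide (i.1 = j) with hpat
  have keyA : ∀ c s : Fin (j+1) → Bool,
      (Acond j (fun k => (c k, s k)) ↔ (c = pat ∧ (∀ k, k < j → psum s (k+1) ≠ 0))) := by
    intro c s
    constructor
    · rintro ⟨h1, h2, h3⟩
      refine ⟨?_, h3⟩
      funext i
      rcases Nat.lt_or_ge i.1 j with hc | hc
      · have := h2 i.1 i.2 hc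
        rw [hpat]
        simp only [Fin.eta] at this
        rw [this]
        simp
        omega
      · have hij : i = ⟨j, by omega⟩ := by
          apply Fin.ext
          have := i.2
          simp only
          omega
        have h1' : c ⟨j, by omega⟩ = true := h1
        rw [hij, hpat]
        simp [h1']
    · rintro ⟨hc, h3⟩
      subst hc
      refine ⟨by simp [hpat], fun i h hij => by simp [hpat]; omega, h3⟩
  calc ∑ c : Fin (j+1) → Bool, ∑ s : Fin (j+1) → Bool,
        (if Acond j (fun k => (c k, s k)) then wt r (fun k => (c k, s k)) else 0)
      = ∑ c : Fin (j+1) → Bool, ∑ s : Fin (j+1) → Bool,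
        (if c = pat ∧ (∀ k, k < j → psum s (k+1) ≠ 0)
          then (∏ k, if c k then r else 1-r) * ((2:ℝ)⁻¹)^(j+1) else 0) := by
        apply Finset.sum_congr rfl; intro c _
        apply Finset.sum_congr rfl; intro s _
        rw [if_congr (keyA c s) (wt_pair c s) rfl]
    _ = (∑ c : Fin (j+1) → Bool, if c = pat then (∏ k, if c k then r else 1-r) else 0)
          * (∑ s : Fin (j+1) → Bool, if (∀ k, k < j → psum s (k+1) ≠ 0)
              then ((2:ℝ)⁻¹)^(j+1) else 0) :=
        by
        rw [Finset.sum_mul_sum]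
        apply Finset.sum_congr rfl; intro c _
        apply Finset.sum_congr rfl; intro s _
        by_cases h1 : c = pat <;> by_cases h2 : (∀ k, k < j → psum s (k+1) ≠ 0)
          <;> simp [h1, h2]
    _ = r * (1-r)^j * q j := by
        have hfac1 : (∑ c : Fin (j+1) → Bool, if c = pat
            then (∏ k, if c k then r else 1-r) else 0) = (1-r)^j * r := by
          rw [Finset.sum_ite_eq' Finset.univ pat (fun c => ∏ k, if c k then r else 1-r)]
          simp only [Finset.mem_univ, if_pos]
          rw [Fin.prod_univ_castSucc]
          congr 1
          · rw [Finset.prod_congr rfl (fun i _ => ?_), Finset.prod_const,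
              Finset.card_univ, Fintype.card_fin]
            have : pat i.castSucc = false := by
              rw [hpat]
              simp [Fin.castSucc, Fin.castAdd, Fin.castLE]
              omega
            rw [this]
            simp
          · have : pat (Fin.last j) = true := by
              rw [hpat]
              simp [Fin.last]
            rw [this]
            simp
        have hfac2 : (∑ s : Fin (j+1) → Bool, if (∀ k, k < j → psum s (k+1) ≠ 0)
            then ((2:ℝ)⁻¹)^(j+1) else 0) = q j := by
          rw [sum_split j 1]
          have keyQ : ∀ (u : Fin j → Bool) (v : Fin 1 → Bool),
              ((∀ k, k < j → psum (Fin.append u v) (k+1) ≠ 0) ↔ (Qcond u ∧ True)) := by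
            intro u v
            constructor
            · intro h
              refine ⟨fun k => ?_, trivial⟩
              rw [← psum_append_left u v (show k.1+1 ≤ j by omega)]
              exact h k.1 k.2
            · rintro ⟨h, -⟩ k hk
              rw [psum_append_left u v (show k+1 ≤ j by omega)]
              exact h ⟨k, hk⟩
          have hsum := sum_ite_prod_eq (Qcond (n := j)) (fun _ : Fin 1 → Bool => True)
          rw [cw_true, mul_one] at hsum
          calc ∑ u : Fin j → Bool, ∑ v : Fin 1 → Bool,
                (if (∀ k, k < j → psum (Fin.append u v) (k+1) ≠ 0)
                  then ((2:ℝ)⁻¹)^(j+1) else 0)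
              = ∑ u : Fin j → Bool, ∑ v : Fin 1 → Bool,
                (if Qcond u ∧ True then ((2:ℝ)⁻¹)^(j+1) else 0) := by
                apply Finset.sum_congr rfl; intro u _
                apply Finset.sum_congr rfl; intro v _
                rw [if_congr (keyQ u v) rfl rfl]
            _ = q j := by
                rw [show q j = cw (Qcond (n := j)) from rfl, ← hsum]
                apply Finset.sum_congr rfl; intro u _
                apply Finset.sum_congr rfl; intro v _
                by_cases hQ : Qcond u <;> simp [hQ]
        rw [hfac1, hfac2]
        ring

end Reset2

section Reset3
open ResetPolya

variable {r : ℝ}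

lemma S_eval (j m : ℕ) : S r ((j+1)+m) j = dker r (j+1) * abar r m := by
  rw [S, sum_split (j+1) m]
  have key : ∀ (a : Fin (j+1) → Bool × Bool) (b : Fin m → Bool × Bool),
      ((firstIdx (fun k : Fin ((j+1)+m) => ((Fin.append a b) k).1 = true) = j
          ∧ FirstReturnAtEnd (Fin.append a b))
        ↔ (Acond j a ∧ (0 < m ∧ FirstReturnAtEnd b))) := by
    intro a b
    set ω := Fin.append a b with hω
    have eleft : ∀ (i : ℕ) (h : i < j+1), ω ⟨i, by omega⟩ = a ⟨i, h⟩ :=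
      fun i h => append_apply_left a b h
    have eright : ∀ (i : ℕ) (h : i < m), ω ⟨(j+1) + i, by omega⟩ = b ⟨i, h⟩ :=
      fun i h => append_apply_right a b h
    constructor
    · rintro ⟨hidx, hFR⟩
      rw [firstIdx_eq_iff_lt _ (show j < (j+1)+m by omega)] at hidx
      obtain ⟨hj, hmin⟩ := hidx
      have haj : (a ⟨j, by omega⟩).1 = true := by
        rw [← eleft j (by omega)]; exact hj
      have hm : 0 < m := by
        by_contra hm0
        have hmeq : j + 1 = (j+1) + m := by omega
        have h2 := (hFR ⟨j, by omega⟩).2 hmeq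
        have h3 : (ω ⟨j, by omega⟩).1 = false := h2.1
        rw [← eleft j (by omega)] at haj
        rw [h3] at haj
        exact Bool.false_ne_true haj
      have hfalse : ∀ (i : ℕ) (h : i < j+1), i < j → (a ⟨i, h⟩).1 = false := by
        intro i h hij
        have h2 := hmin i (by omega) hij
        rw [← eleft i h]
        revert h2
        generalize (ω ⟨i, _⟩).1 = x
        intro h2
        exact Bool.not_eq_true x ▸ h2
      have hposa : ∀ k, k < j → pos ω (k+1) = psum (fun i => (a i).2) (k+1) := by
        intro k hk
        rw [pos_append_left a b (show k+1 ≤ j+1 by omega)]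
        apply pos_eq_psum
        intro i hi hik
        exact hfalse i hi (by omega)
      have hpos0 : pos a (j+1) = 0 := pos_reset a (by omega) haj
      refine ⟨⟨haj, hfalse, ?_⟩, hm, ?_⟩
      · intro k hk hv
        have h2 := (hFR ⟨k, by omega⟩).1
        have h3 : (ω ⟨k, by omega⟩).1 = false := by
          rw [eleft k (by omega)]
          exact hfalse k (by omega) hk
        have h4 : k + 1 = (j+1) + m := h2 ⟨h3, by rw [hposa k hk]; exact hv⟩
        omega
      · intro i
        have h2 := hFR ⟨(j+1) + i.1, by omega⟩
        have e1 : (ω ⟨(j+1) + i.1, by omega⟩).1 = (b i).1 := by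
          rw [eright i.1 i.2, Fin.eta]
        have e2 : pos ω ((j+1) + i.1 + 1) = pos b (i.1 + 1) := by
          rw [show (j+1) + i.1 + 1 = (j+1) + (i.1 + 1) by omega]
          exact pos_append_right a b hpos0 (by omega)
        constructor
        · rintro ⟨hb1, hb2⟩
          have h3 : (j+1) + i.1 + 1 = (j+1) + m := h2.1 ⟨by rw [e1]; exact hb1,
            by rw [e2]; exact hb2⟩
          omega
        · intro hv
          have h3 := h2.2 (show (j+1) + i.1 + 1 = (j+1) + m by omega)
          exact ⟨by rw [← e1]; exact h3.1, by rw [← e2]; exact h3.2⟩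
    · rintro ⟨⟨ha1, ha2, ha3⟩, hm, hb⟩
      have hpos0 : pos a (j+1) = 0 := pos_reset a (by omega) ha1
      have hposa : ∀ k, k < j → pos ω (k+1) = psum (fun i => (a i).2) (k+1) := by
        intro k hk
        rw [pos_append_left a b (show k+1 ≤ j+1 by omega)]
        apply pos_eq_psum
        intro i hi hik
        exact ha2 i hi (by omega)
      constructor
      · rw [firstIdx_eq_iff_lt _ (show j < (j+1)+m by omega)]
        constructor
        · rw [eleft j (by omega)]
          exact ha1
        · intro i hi hij
          have h3 : (ω ⟨i, hi⟩).1 = false := by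
            rw [eleft i (by omega)]
            exact ha2 i (by omega) hij
          rw [h3]
          simp
      · intro k
        rcases Nat.lt_trichotomy k.1 j with hc | hc | hc
        · constructor
          · rintro ⟨h1, h2⟩
            rw [hposa k.1 hc] at h2
            exact absurd h2 (ha3 k.1 hc)
          · intro hv
            have := k.2
            omega
        · constructor
          · rintro ⟨h1, -⟩
            have h3 : (ω k).1 = true := by
              have hk : k = ⟨j, by omega⟩ := Fin.ext (by simp only [Fin.val_mk]; omega)
              rw [hk, eleft j (by omega)]
              exact ha1
            rw [h3] at h1
            exact absurd h1 (by simp)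
          · intro hv
            omega
        · have hi : k.1 - (j+1) < m := by have := k.2; omega
          have hkk : k = ⟨(j+1) + (k.1 - (j+1)), by omega⟩ :=
            Fin.ext (by simp only [Fin.val_mk]; omega)
          have h2 := hb ⟨k.1 - (j+1), hi⟩
          have e1 : (ω k).1 = (b ⟨k.1 - (j+1), hi⟩).1 := by
            conv_lhs => rw [hkk]
            rw [eright _ hi]
          have e2 : pos ω (k.1 + 1) = pos b (k.1 - (j+1) + 1) := by
            rw [show k.1 + 1 = (j+1) + (k.1 - (j+1) + 1) by omega]
            exact pos_append_right a b hpos0 (by omega)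
          constructor
          · rintro ⟨h3, h4⟩
            have h5 : k.1 - (j+1) + 1 = m := h2.1 ⟨by rw [← e1]; exact h3,
              by rw [← e2]; exact h4⟩
            have := k.2
            omega
          · intro hv
            have h5 := h2.2 (show k.1 - (j+1) + 1 = m by omega)
            exact ⟨by rw [e1]; exact h5.1, by rw [e2]; exact h5.2⟩
  calc ∑ a : Fin (j+1) → Bool × Bool, ∑ b : Fin m → Bool × Bool,
        (if firstIdx (fun k : Fin ((j+1)+m) => ((Fin.append a b) k).1 = true) = j
            ∧ FirstReturnAtEnd (Fin.append a b)
          then wt r (Fin.append a b) else 0)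
      = ∑ a : Fin (j+1) → Bool × Bool, ∑ b : Fin m → Bool × Bool,
        (if Acond j a ∧ (0 < m ∧ FirstReturnAtEnd b) then wt r a * wt r b else 0) := by
        apply Finset.sum_congr rfl; intro a _
        apply Finset.sum_congr rfl; intro b _
        rw [if_congr (key a b) (wt_append a b) rfl]
    _ = (∑ a : Fin (j+1) → Bool × Bool, if Acond j a then wt r a else 0)
          * (∑ b : Fin m → Bool × Bool, if (0 < m ∧ FirstReturnAtEnd b)
              then wt r b else 0) := by
        rw [Finset.sum_mul_sum]
        apply Finset.sum_congr rfl; intro a _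
        apply Finset.sum_congr rfl; intro b _
        by_cases h1 : Acond j a <;> by_cases h2 : (0 < m ∧ FirstReturnAtEnd b)
          <;> simp [h1, h2]
    _ = dker r (j+1) * abar r m := by
        rw [SA_eval j]
        have hB : (∑ b : Fin m → Bool × Bool, if (0 < m ∧ FirstReturnAtEnd b)
            then wt r b else 0) = abar r m := by
          cases m with
          | zero =>
            rw [show abar r 0 = 0 from rfl]
            apply Finset.sum_eq_zero
            intro b _
            simp
          | succ i =>
            rw [show abar r (i+1) = prob r (i+1) FirstReturnAtEnd from rfl, prob_eq]
            apply Finset.sum_congr rfl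
            intro b _
            by_cases h2 : FirstReturnAtEnd b <;> simp [h2]
        rw [hB, show dker r (j+1) = r * (1-r)^j * q j from rfl]

lemma abar_rec (τ : ℕ) :
    abar r τ = (1-r)^τ * f τ
      + ∑ jj ∈ Finset.range τ, dker r (jj+1) * abar r (τ - (jj+1)) := by
  cases τ with
  | zero => simp [abar, f]
  | succ n =>
    rw [show abar r (n+1) = prob r (n+1) FirstReturnAtEnd from rfl, prob_partition,
      Finset.sum_range_succ, S_none, fq_succ, show g n = f (n+1) from rfl]
    rw [add_comm]
    congr 1
    apply Finset.sum_congr rfl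
    intro jj hjj
    rw [Finset.mem_range] at hjj
    have hn : n + 1 = (jj+1) + (n + 1 - (jj+1)) := by omega
    rw [show S r (n+1) jj = S r ((jj+1) + (n + 1 - (jj+1))) jj from by rw [← hn]]
    exact S_eval jj (n + 1 - (jj+1))

end Reset3

section Series
open ResetPolya

variable {r : ℝ}

lemma summable_coef {c : ℕ → ℝ} (h0 : ∀ n, 0 ≤ c n) (h1 : ∀ n, c n ≤ 1)
    {v : ℝ} (hv0 : 0 ≤ v) (hv1 : v < 1) : Summable (fun n => c n * v^n) :=
  Summable.of_nonneg_of_le (fun n => mul_nonneg (h0 n) (pow_nonneg hv0 n))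
    (fun n => mul_le_of_le_one_left (pow_nonneg hv0 n) (h1 n))
    (summable_geometric_of_lt_one hv0 hv1)

lemma hasSum_mul_antidiagonal {x y : ℕ → ℝ} (hx0 : ∀ n, 0 ≤ x n) (hy0 : ∀ n, 0 ≤ y n)
    (hx : Summable x) (hy : Summable y) :
    HasSum (fun n => ∑ kl ∈ Finset.HasAntidiagonal.antidiagonal n, x kl.1 * y kl.2)
      ((∑' n, x n) * (∑' n, y n)) := by
  have hx' : Summable (fun n => ‖x n‖) :=
    hx.congr (fun n => (Real.norm_of_nonneg (hx0 n)).symm)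
  have hy' : Summable (fun n => ‖y n‖) :=
    hy.congr (fun n => (Real.norm_of_nonneg (hy0 n)).symm)
  have hs := summable_norm_sum_mul_antidiagonal_of_summable_norm hx' hy'
  have hsum : Summable (fun n => ∑ kl ∈ Finset.HasAntidiagonal.antidiagonal n, x kl.1 * y kl.2) :=
    Summable.of_norm hs
  have ht := tsum_mul_tsum_eq_tsum_sum_antidiagonal_of_summable_norm hx' hy'
  exact ht ▸ hsum.hasSum

lemma g_partial (n : ℕ) : ∑ i ∈ Finset.range n, g i ≤ 1 := by
  have h := qrec n
  rw [Finset.sum_congr rfl (fun j _ => fq_succ j)] at h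
  have := q_nonneg n
  linarith

lemma hasSum_f {v : ℝ} (hv0 : 0 < v) (hv1 : v < 1) :
    HasSum (fun n => f n * v ^ n) (1 - Real.sqrt (1 - v^2)) := by
  have sg : Summable (fun n => g n * v^n) :=
    summable_coef g_nonneg g_le_one hv0.le hv1
  set G := ∑' n, g n * v^n with hG
  have hGsq : HasSum (fun n => (∑ kl ∈ Finset.HasAntidiagonal.antidiagonal n, g kl.1 * g kl.2) * v^n)
      (G * G) := by
    have h := hasSum_mul_antidiagonal
      (fun n => mul_nonneg (g_nonneg n) (pow_nonneg hv0.le n))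
      (fun n => mul_nonneg (g_nonneg n) (pow_nonneg hv0.le n)) sg sg
    have hfe : (fun n => ∑ kl ∈ Finset.HasAntidiagonal.antidiagonal n, (g kl.1 * v^kl.1) * (g kl.2 * v^kl.2))
        = fun n => (∑ kl ∈ Finset.HasAntidiagonal.antidiagonal n, g kl.1 * g kl.2) * v^n := by
      funext n
      rw [Finset.sum_mul]
      apply Finset.sum_congr rfl
      intro kl hkl
      have hmem := Finset.HasAntidiagonal.mem_antidiagonal.1 hkl
      rw [← hmem, pow_add]
      ring
    exact hfe ▸ h
  have hshift : HasSum (fun n => g (n+1) * v^(n+1)) G := by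
    refine (hasSum_nat_add_iff (f := fun n => g n * v^n) 1).2 ?_
    simpa [g_zero] using sg.hasSum
  have hdelta : HasSum (fun n => (if n = 0 then (1:ℝ) else 0) * v^n) 1 := by
    have h := hasSum_ite_eq (0:ℕ) (1:ℝ)
    have hfe : (fun n : ℕ => if n = 0 then (1:ℝ) else 0)
        = fun n => (if n = 0 then (1:ℝ) else 0) * v^n := by
      funext n
      by_cases h : n = 0 <;> simp [h]
    exact hfe ▸ h
  have hrhs : HasSum (fun n => g (n+1) * v^(n+1)) (2⁻¹ * v * (1 + G * G)) := by
    have h1 := (hdelta.add hGsq).mul_left (2⁻¹ * v)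
    have hfe : (fun n => (2⁻¹ * v) * ((if n = 0 then (1:ℝ) else 0) * v^n
          + (∑ kl ∈ Finset.HasAntidiagonal.antidiagonal n, g kl.1 * g kl.2) * v^n))
        = fun n => g (n+1) * v^(n+1) := by
      funext n
      rw [g_succ n]
      ring
    rw [show 2⁻¹ * v * (1 + G * G) = 2⁻¹ * v * (1 * 1 + G * G) by ring] at h1 ⊢
    exact hfe ▸ h1
  have hGval : G = 2⁻¹ * v * (1 + G * G) := by
    have := hshift.unique hrhs
    linarith [this]
  have hGle : G ≤ 1 := by
    apply Summable.tsum_le_of_sum_range_le sg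
    intro n
    calc ∑ i ∈ Finset.range n, g i * v^i
        ≤ ∑ i ∈ Finset.range n, g i := by
          apply Finset.sum_le_sum
          intro i _
          exact mul_le_of_le_one_right (g_nonneg i) (pow_le_one₀ hv0.le hv1.le)
      _ ≤ 1 := g_partial n
  have hG0 : 0 ≤ G :=
    tsum_nonneg (fun n => mul_nonneg (g_nonneg n) (pow_nonneg hv0.le n))
  have hq2 : (1 - v*G)^2 = 1 - v^2 := by linear_combination (-2*v) * hGval
  have hpos : 0 < 1 - v*G := by nlinarith
  have hfinal : 1 - Real.sqrt (1 - v^2) = v * G := by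
    rw [← hq2, Real.sqrt_sq hpos.le]
    ring
  rw [hfinal]
  have hvG : HasSum (fun n => f (n+1) * v^(n+1)) (v * G) := by
    have h := sg.hasSum.mul_left v
    have hfe : (fun n => v * (g n * v^n)) = fun n => f (n+1) * v^(n+1) := by
      funext n
      rw [show f (n+1) = g n from rfl]
      ring
    exact hfe ▸ h
  have h2 := (hasSum_nat_add_iff (f := fun n => f n * v^n) 1).1 hvG
  simpa [show f 0 = (0:ℝ) from rfl] using h2

lemma hasSum_q' {v : ℝ} (hv0 : 0 < v) (hv1 : v < 1) :
    HasSum (fun n => q n * v^n)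
      ((1-v)⁻¹ - (1 - Real.sqrt (1 - v^2)) * (1-v)⁻¹) := by
  have hf : HasSum (fun n => f n * v^n) (1 - Real.sqrt (1 - v^2)) := hasSum_f hv0 hv1
  have hgeo : HasSum (fun n => (1:ℝ) * v^n) ((1-v)⁻¹) := by
    simpa using hasSum_geometric_of_lt_one hv0.le hv1
  have h := hasSum_mul_antidiagonal
    (fun n => mul_nonneg (f_nonneg n) (pow_nonneg hv0.le n))
    (fun n => mul_nonneg zero_le_one (pow_nonneg hv0.le n)) hf.summable hgeo.summable
  rw [hf.tsum_eq, hgeo.tsum_eq] at h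
  have hfe : (fun n => ∑ kl ∈ Finset.HasAntidiagonal.antidiagonal n, (f kl.1 * v^kl.1) * (1 * v^kl.2))
      = fun n => (∑ j ∈ Finset.range n, g j) * v^n := by
    funext n
    rw [Finset.Nat.sum_antidiagonal_eq_sum_range_succ_mk]
    have step : ∀ k ∈ Finset.range (n+1),
        (f k * v^k) * (1 * v^(n-k)) = f k * v^n := by
      intro k hk
      rw [Finset.mem_range] at hk
      rw [one_mul, mul_assoc, ← pow_add, show k + (n-k) = n by omega]
    rw [Finset.sum_congr rfl step, ← Finset.sum_mul, Finset.sum_range_succ']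
    have hfg : (∑ k ∈ Finset.range n, f (k+1)) + f 0 = ∑ j ∈ Finset.range n, g j := by
      rw [show f 0 = (0:ℝ) from rfl, add_zero]
      exact Finset.sum_congr rfl (fun j _ => rfl)
    rw [hfg]
  rw [hfe] at h
  have h2 := hgeo.sub h
  have hfe2 : (fun n => 1 * v^n - (∑ j ∈ Finset.range n, g j) * v^n)
      = fun n => q n * v^n := by
    funext n
    have h3 := qrec n
    rw [Finset.sum_congr rfl (fun j _ => fq_succ j)] at h3
    have : q n = 1 - ∑ j ∈ Finset.range n, g j := by linarith
    rw [this]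
    ring
  rw [hfe2] at h2
  exact h2

lemma abar_nonneg (hr0 : 0 ≤ r) (hr1 : r ≤ 1) (n : ℕ) : 0 ≤ abar r n := by
  cases n with
  | zero => exact le_refl 0
  | succ n => exact prob_nonneg hr0 hr1 _

lemma abar_le_one (hr0 : 0 ≤ r) (hr1 : r ≤ 1) (n : ℕ) : abar r n ≤ 1 := by
  cases n with
  | zero => exact zero_le_one
  | succ n => exact prob_le_one hr0 hr1 _

lemma dker_nonneg (hr0 : 0 ≤ r) (hr1 : r ≤ 1) (n : ℕ) : 0 ≤ dker r n := by
  cases n with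
  | zero => exact le_refl 0
  | succ n =>
    have := q_nonneg n
    have h2 : (0:ℝ) ≤ (1-r)^n := pow_nonneg (by linarith) n
    show 0 ≤ r * (1-r)^n * q n
    positivity

lemma dker_le_one (hr0 : 0 ≤ r) (hr1 : r ≤ 1) (n : ℕ) : dker r n ≤ 1 := by
  cases n with
  | zero => exact zero_le_one
  | succ n =>
    show r * (1-r)^n * q n ≤ 1
    have h1 := q_le_one n
    have h0 := q_nonneg n
    have h2 : (0:ℝ) ≤ (1-r)^n := pow_nonneg (by linarith) n
    have h3 : (1-r)^n ≤ 1 := pow_le_one₀ (by linarith) (by linarith)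
    have h4 : r * (1-r)^n ≤ 1 := mul_le_one₀ hr1 h2 h3
    have h5 : 0 ≤ r * (1-r)^n := mul_nonneg hr0 h2
    exact mul_le_one₀ h4 h0 h1

lemma dker_antidiag (n : ℕ) :
    ∑ kl ∈ Finset.HasAntidiagonal.antidiagonal n, dker r kl.1 * abar r kl.2
      = ∑ jj ∈ Finset.range n, dker r (jj+1) * abar r (n - (jj+1)) := by
  rw [Finset.Nat.sum_antidiagonal_eq_sum_range_succ_mk, Finset.sum_range_succ']
  simp [show dker r 0 = 0 from rfl]

end Series

end ResetPolyaAux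

/-- The generating function of the distribution of the first spontaneous return time
`T^{(r)}` of the reset Pólya walk is the 'dressed' generating function `ρ̃^{(r)}`. -/
theorem statement6 (r : ℝ) (hr : r ∈ Set.Ioo (0 : ℝ) 1)
    (w : ℝ) (hw : w ∈ Set.Ioo (0 : ℝ) 1)
    (wb : ℝ) (hwb : wb = (1 - r) * w)
    (ρ : ℝ → ℝ) (hρ : ∀ v, ρ v = 1 - Real.sqrt (1 - v ^ 2)) :
    HasSum (fun τ : ℕ => w ^ (τ + 1) * prob r (τ + 1) FirstReturnAtEnd)
      ((1 - wb) * ρ wb / (1 - w + r * w * ρ wb)) := by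
  classical
  open ResetPolyaAux in
  obtain ⟨hr0, hr1⟩ := hr
  obtain ⟨hw0, hw1⟩ := hw
  have hwb0 : 0 < wb := by rw [hwb]; nlinarith
  have hwb1 : wb < 1 := by rw [hwb]; nlinarith
  have hρv : ρ wb = 1 - Real.sqrt (1 - wb^2) := hρ wb
  have hsqrt_le : Real.sqrt (1 - wb^2) ≤ 1 := Real.sqrt_le_one.mpr (by nlinarith)
  have hρ0 : 0 ≤ ρ wb := by rw [hρv]; linarith
  have hA_sum : Summable (fun n => abar r n * w^n) :=
    summable_coef (abar_nonneg hr0.le hr1.le) (abar_le_one hr0.le hr1.le) hw0.le hw1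
  set A := ∑' n, abar r n * w^n with hA
  -- the first-return series
  have hC : HasSum (fun n => ((1-r)^n * f n) * w^n) (ρ wb) := by
    have h := hasSum_f hwb0 hwb1
    rw [hρv]
    have hfe : (fun n => f n * wb^n) = fun n => ((1-r)^n * f n) * w^n := by
      funext n
      rw [hwb, mul_pow]
      ring
    exact hfe ▸ h
  -- the kernel series
  have hQ := hasSum_q' hwb0 hwb1
  set QQ := (1-wb)⁻¹ - (1 - Real.sqrt (1 - wb^2)) * (1-wb)⁻¹ with hQQ
  have hD : HasSum (fun n => dker r n * w^n) (r * w * QQ) := by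
    have h1 : HasSum (fun n => dker r (n+1) * w^(n+1)) (r*w*QQ) := by
      have h := hQ.mul_left (r*w)
      have hfe : (fun n => (r*w) * (q n * wb^n)) = fun n => dker r (n+1) * w^(n+1) := by
        funext n
        rw [show dker r (n+1) = r * (1-r)^n * q n from rfl, hwb, mul_pow]
        ring
      exact hfe ▸ h
    have h2 := (hasSum_nat_add_iff (f := fun n => dker r n * w^n) 1).1 h1
    simpa [show dker r 0 = (0:ℝ) from rfl] using h2
  have hD_sum : Summable (fun n => dker r n * w^n) :=
    summable_coef (dker_nonneg hr0.le hr1.le) (dker_le_one hr0.le hr1.le) hw0.le hw1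
  -- Cauchy product
  have hDA : HasSum (fun n =>
      ∑ kl ∈ Finset.HasAntidiagonal.antidiagonal n, (dker r kl.1 * w^kl.1) * (abar r kl.2 * w^kl.2))
      (r * w * QQ * A) := by
    have h := hasSum_mul_antidiagonal
      (fun n => mul_nonneg (dker_nonneg hr0.le hr1.le n) (pow_nonneg hw0.le n))
      (fun n => mul_nonneg (abar_nonneg hr0.le hr1.le n) (pow_nonneg hw0.le n))
      hD_sum hA_sum
    rw [hD.tsum_eq] at h
    exact h
  have hDA' : HasSum (fun n =>
      (∑ kl ∈ Finset.HasAntidiagonal.antidiagonal n, dker r kl.1 * abar r kl.2) * w^n)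
      (r * w * QQ * A) := by
    have hfe : (fun n =>
        ∑ kl ∈ Finset.HasAntidiagonal.antidiagonal n, (dker r kl.1 * w^kl.1) * (abar r kl.2 * w^kl.2))
        = fun n => (∑ kl ∈ Finset.HasAntidiagonal.antidiagonal n, dker r kl.1 * abar r kl.2) * w^n := by
      funext n
      rw [Finset.sum_mul]
      apply Finset.sum_congr rfl
      intro kl hkl
      have hmem := Finset.HasAntidiagonal.mem_antidiagonal.1 hkl
      rw [← hmem, pow_add]
      ring
    exact hfe ▸ hDA
  -- renewal equation
  have hrecsum : HasSum (fun n => abar r n * w^n) (ρ wb + r*w*QQ*A) := by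
    have h := hC.add hDA'
    have hfe : (fun n => ((1-r)^n * f n) * w^n
        + (∑ kl ∈ Finset.HasAntidiagonal.antidiagonal n, dker r kl.1 * abar r kl.2) * w^n)
        = fun n => abar r n * w^n := by
      funext n
      rw [dker_antidiag, ← add_mul, ← abar_rec n]
    exact hfe ▸ h
  have hAval : A = ρ wb + r*w*QQ*A := hA_sum.hasSum.unique hrecsum
  -- solve for A
  have hwbne : (1:ℝ) - wb ≠ 0 := by linarith
  have hQQwb : QQ * (1 - wb) = 1 - ρ wb := by
    rw [hQQ, hρv]
    field_simp
  have hden : 0 < 1 - w + r * w * ρ wb := by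
    have hrw : 0 ≤ r * w * ρ wb := by positivity
    linarith
  have hAeq : A * (1 - w + r * w * ρ wb) = ρ wb * (1 - wb) := by
    linear_combination (1 - wb) * hAval + (r*w*A) * hQQwb + A * hwb
  have htarget : A = (1 - wb) * ρ wb / (1 - w + r * w * ρ wb) := by
    rw [eq_div_iff hden.ne']
    linarith [hAeq]
  -- conclude
  have h4 : HasSum (fun n => abar r (n+1) * w^(n+1)) A := by
    refine (hasSum_nat_add_iff (f := fun n => abar r n * w^n) 1).2 ?_
    simpa [show abar r 0 = (0:ℝ) from rfl] using hA_sum.hasSum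
  rw [← htarget]
  have hfe : (fun n => abar r (n+1) * w^(n+1))
      = fun τ : ℕ => w ^ (τ + 1) * prob r (τ + 1) FirstReturnAtEnd := by
    funext n
    rw [show abar r (n+1) = prob r (n+1) FirstReturnAtEnd from rfl]
    ring
  exact hfe ▸ h4
end

section
/- For every r ∈ (0,1), the function D(w) = 1 − w + r·w·(1 − √(1 − (1−r)²w²)) has a unique zero w₀ in the open interval (1, 1/(1−r)), and this w₀ satisfies the cubic equation r²(1−r)·w₀³ + r²·w₀² + (1−r)·w₀ − 1 = 0. -/
lemma key_equiv (r : ℝ) (hr0 : 0 < r) (hr1 : r < 1) (w : ℝ)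
    (hw1 : 1 < w) (hw2 : w < 1 / (1 - r)) :
    (1 - w + r * w * (1 - Real.sqrt (1 - (1 - r) ^ 2 * w ^ 2)) = 0) ↔
    (r ^ 2 * (1 - r) * w ^ 3 + r ^ 2 * w ^ 2 + (1 - r) * w - 1 = 0) := by
  have h1r : 0 < 1 - r := by linarith
  have hw0 : 0 < w := by linarith
  have hlt : (1 - r) * w < 1 := by
    have := (lt_div_iff₀ h1r).mp hw2
    linarith
  have hrw : 0 < (1 - r) * w := mul_pos h1r hw0
  have harg : 0 ≤ 1 - (1 - r) ^ 2 * w ^ 2 := by nlinarith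
  set s := Real.sqrt (1 - (1 - r) ^ 2 * w ^ 2) with hs
  have hs0 : 0 ≤ s := Real.sqrt_nonneg _
  have hs2 : s ^ 2 = 1 - (1 - r) ^ 2 * w ^ 2 := Real.sq_sqrt harg
  have hpos : 0 < 1 - (1 - r) * w := by linarith
  constructor
  · intro h
    have key : r * w * s = 1 - (1 - r) * w := by linear_combination -h
    have hsq : (r * w * s) ^ 2 = (1 - (1 - r) * w) ^ 2 := by rw [key]
    have hfac : (1 - (1 - r) * w) * (r ^ 2 * w ^ 2 * (1 + (1 - r) * w) - (1 - (1 - r) * w)) = 0 := by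
      linear_combination hsq - r ^ 2 * w ^ 2 * hs2
    have h2 := (mul_eq_zero.mp hfac).resolve_left hpos.ne'
    linear_combination h2
  · intro h
    have key2 : (r * w * s) ^ 2 = (1 - (1 - r) * w) ^ 2 := by
      linear_combination r ^ 2 * w ^ 2 * hs2 + (1 - (1 - r) * w) * h
    have hfac2 : (r * w * s - (1 - (1 - r) * w)) * (r * w * s + (1 - (1 - r) * w)) = 0 := by
      linear_combination key2
    have hsum : 0 < r * w * s + (1 - (1 - r) * w) := by
      have : 0 ≤ r * w * s := by positivity
      linarith
    have key := (mul_eq_zero.mp hfac2).resolve_right hsum.ne'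
    linear_combination -key

/-- The denominator `D(w) = 1 − w + r·w·(1 − √(1 − (1−r)²w²))` of the 'dressed'
generating function of the reset Pólya walk has a unique zero `w₀` in
`(1, 1/(1−r))`, and this zero satisfies the cubic equation
`r²(1−r)w₀³ + r²w₀² + (1−r)w₀ − 1 = 0`. -/
theorem statement10 (r : ℝ) (hr : r ∈ Set.Ioo (0 : ℝ) 1)
    (D : ℝ → ℝ)
    (hD : ∀ w, D w = 1 - w + r * w * (1 - Real.sqrt (1 - (1 - r) ^ 2 * w ^ 2))) :
    (∃! w₀ : ℝ, w₀ ∈ Set.Ioo (1 : ℝ) (1 / (1 - r)) ∧ D w₀ = 0) ∧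
    ∀ w₀ ∈ Set.Ioo (1 : ℝ) (1 / (1 - r)), D w₀ = 0 →
      r ^ 2 * (1 - r) * w₀ ^ 3 + r ^ 2 * w₀ ^ 2 + (1 - r) * w₀ - 1 = 0 := by
  obtain ⟨hr0, hr1⟩ := hr
  have h1r : 0 < 1 - r := by linarith
  set f : ℝ → ℝ := fun w => r ^ 2 * (1 - r) * w ^ 3 + r ^ 2 * w ^ 2 + (1 - r) * w - 1 with hf
  -- cubic is strictly monotone on positives (uniqueness helper)
  have huniq : ∀ u v : ℝ, 1 < u → 1 < v → f u = 0 → f v = 0 → u = v := by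
    intro u v hu hv hfu hfv
    by_contra hne
    have hfac : (u - v) * (r ^ 2 * (1 - r) * (u ^ 2 + u * v + v ^ 2) + r ^ 2 * (u + v) + (1 - r)) = 0 := by
      simp only [hf] at hfu hfv
      linear_combination hfu - hfv
    have hbr : 0 < r ^ 2 * (1 - r) * (u ^ 2 + u * v + v ^ 2) + r ^ 2 * (u + v) + (1 - r) := by
      have huv : 0 < u * v := mul_pos (by linarith) (by linarith)
      have t1 : 0 ≤ r ^ 2 * (1 - r) * (u ^ 2 + u * v + v ^ 2) :=
        mul_nonneg (mul_nonneg (sq_nonneg r) h1r.le) (by nlinarith)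
      have t2 : 0 < r ^ 2 * (u + v) := mul_pos (pow_pos hr0 2) (by linarith)
      linarith
    have := (mul_eq_zero.mp hfac).resolve_right hbr.ne'
    exact hne (by linarith [sub_eq_zero.mp this])
  -- existence of cubic root via IVT
  have hcont : ContinuousOn f (Set.Icc 1 (1 / (1 - r))) := by fun_prop
  have hab : (1 : ℝ) ≤ 1 / (1 - r) := by
    rw [le_div_iff₀ h1r]; linarith
  have hf1 : f 1 < 0 := by
    simp only [hf]; nlinarith [mul_pos hr0 (mul_pos h1r h1r)]
  have hfb : 0 < f (1 / (1 - r)) := by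
    have : f (1 / (1 - r)) = 2 * r ^ 2 / (1 - r) ^ 2 := by
      simp only [hf]; field_simp; ring
    rw [this]; positivity
  have hIVT := intermediate_value_Ioo hab hcont
  have hmem : (0 : ℝ) ∈ Set.Ioo (f 1) (f (1 / (1 - r))) := ⟨hf1, hfb⟩
  obtain ⟨w₀, hw₀mem, hw₀⟩ := hIVT hmem
  obtain ⟨hw₀1, hw₀2⟩ := hw₀mem
  have hDw₀ : D w₀ = 0 := by
    rw [hD]
    exact (key_equiv r hr0 hr1 w₀ hw₀1 hw₀2).mpr hw₀
  constructor
  · refine ⟨w₀, ⟨⟨hw₀1, hw₀2⟩, hDw₀⟩, ?_⟩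
    rintro v ⟨⟨hv1, hv2⟩, hDv⟩
    have hcv : f v = 0 := (key_equiv r hr0 hr1 v hv1 hv2).mp (by rw [hD v] at hDv; exact hDv)
    exact huniq v w₀ hv1 hw₀1 hcv hw₀
  · rintro v ⟨hv1, hv2⟩ hDv
    exact (key_equiv r hr0 hr1 v hv1 hv2).mp (by rw [hD v] at hDv; exact hDv)
end

section
/- For every r ∈ (0,1) and every integer ℓ ≥ 1, the ℓ-th derivative at μ = 0 of the function μ ↦ ln(1 − r + r·e^μ) (the cumulant generating function of a Bernoulli(r) random variable) equals Σ_{k=1}^{ℓ} (−1)^{k−1} · (k−1)! · S(ℓ,k) · r^k, where S(ℓ,k) denotes the Stirling numbers of the second kind. -/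
/-- Stirling numbers of the second kind: `stirling2 n k` is the number of
partitions of an `n`-element set into `k` nonempty blocks. -/
def stirling2 : ℕ → ℕ → ℕ
  | 0, 0 => 1
  | 0, _ + 1 => 0
  | _ + 1, 0 => 0
  | n + 1, k + 1 => (k + 1) * stirling2 n (k + 1) + stirling2 n k

lemma stirling2_zero_of_lt : ∀ n k, n < k → stirling2 n k = 0 := by
  intro n
  induction n with
  | zero => intro k hk; cases k with
    | zero => omega
    | succ m => rfl
  | succ n ih =>
    intro k hk
    cases k with
    | zero => omega
    | succ m =>
      show (m + 1) * stirling2 n (m + 1) + stirling2 n m = 0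
      rw [ih (m+1) (by omega), ih m (by omega)]; ring

lemma stirling2_succ_zero (n : ℕ) : stirling2 (n+1) 0 = 0 := rfl

lemma stirling2_succ_succ (n k : ℕ) :
    stirling2 (n+1) (k+1) = (k + 1) * stirling2 n (k + 1) + stirling2 n k := rfl

lemma key (r : ℝ) (hr : r ∈ Set.Ioo (0 : ℝ) 1) :
    ∀ ℓ, 1 ≤ ℓ → iteratedDeriv ℓ (fun μ : ℝ => Real.log (1 - r + r * Real.exp μ)) =
      fun μ => ∑ j ∈ Finset.range ℓ,
        (-1 : ℝ) ^ j * (Nat.factorial j : ℝ) * (stirling2 ℓ (j+1) : ℝ) *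
          (r * Real.exp μ / (1 - r + r * Real.exp μ)) ^ (j+1) := by
  obtain ⟨hr0, hr1⟩ := hr
  set f : ℝ → ℝ := fun μ => 1 - r + r * Real.exp μ with hf
  set p : ℝ → ℝ := fun μ => r * Real.exp μ / f μ with hp
  have hfpos : ∀ μ, 0 < f μ := fun μ => by
    have := Real.exp_pos μ
    have : 0 < r * Real.exp μ := by positivity
    simp only [hf]; nlinarith
  have hfne : ∀ μ, f μ ≠ 0 := fun μ => (hfpos μ).ne'
  have hfd : ∀ μ, HasDerivAt f (r * Real.exp μ) μ := by
    intro μ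
    have h1 : HasDerivAt (fun μ : ℝ => r * Real.exp μ) (r * Real.exp μ) μ := by
      simpa using (Real.hasDerivAt_exp μ).const_mul r
    exact ((hasDerivAt_const μ (1 - r)).add h1).congr_deriv (zero_add _)
  have hKd : ∀ μ, HasDerivAt (fun μ : ℝ => Real.log (1 - r + r * Real.exp μ)) (p μ) μ := by
    intro μ
    exact (hfd μ).log (hfne μ)
  have hpd : ∀ μ, HasDerivAt p (p μ - (p μ)^2) μ := by
    intro μ
    have h1 : HasDerivAt (fun μ : ℝ => r * Real.exp μ) (r * Real.exp μ) μ := by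
      simpa using (Real.hasDerivAt_exp μ).const_mul r
    have := h1.div (hfd μ) (hfne μ)
    refine this.congr_deriv ?_
    have hne := hfne μ
    simp only [hp]
    field_simp
  intro ℓ hℓ
  induction ℓ, hℓ using Nat.le_induction with
  | base =>
    rw [iteratedDeriv_one]
    funext μ
    rw [(hKd μ).deriv]
    simp [stirling2, hp, hf]
  | succ n hn ih =>
    rw [iteratedDeriv_succ, ih]
    funext μ
    have hsum : HasDerivAt
        (fun μ => ∑ j ∈ Finset.range n,
          (-1 : ℝ) ^ j * (Nat.factorial j : ℝ) * (stirling2 n (j+1) : ℝ) *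
            (r * Real.exp μ / (1 - r + r * Real.exp μ)) ^ (j+1))
        (∑ j ∈ Finset.range n,
          (-1 : ℝ) ^ j * (Nat.factorial j : ℝ) * (stirling2 n (j+1) : ℝ) *
            ((↑(j+1) : ℝ) * p μ ^ j * (p μ - (p μ)^2))) μ := by
      apply HasDerivAt.fun_sum
      intro j _
      exact (((hpd μ).pow (j+1)).const_mul _)
    rw [hsum.deriv]
    -- now algebra
    have expand : ∀ j ∈ Finset.range n,
        (-1 : ℝ) ^ j * (Nat.factorial j : ℝ) * (stirling2 n (j+1) : ℝ) *
          ((↑(j+1) : ℝ) * p μ ^ j * (p μ - (p μ)^2)) =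
        (-1 : ℝ) ^ j * (Nat.factorial j : ℝ) * (stirling2 n (j+1) : ℝ) * (↑(j+1) : ℝ) * p μ ^ (j+1)
        - ((-1 : ℝ) ^ j * (Nat.factorial j : ℝ) * (stirling2 n (j+1) : ℝ) * (↑(j+1) : ℝ)) * p μ ^ (j+2) := by
      intro j _; ring
    rw [Finset.sum_congr rfl expand, Finset.sum_sub_distrib]
    -- define B j := A n (j-1) * j * p^{j+1}
    have h2 : ∑ j ∈ Finset.range n,
        ((-1 : ℝ) ^ j * (Nat.factorial j : ℝ) * (stirling2 n (j+1) : ℝ) * (↑(j+1) : ℝ)) * p μ ^ (j+2)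
        = ∑ j ∈ Finset.range (n+1),
        ((-1 : ℝ) ^ (j-1) * (Nat.factorial (j-1) : ℝ) * (stirling2 n j : ℝ) * (j : ℝ)) * p μ ^ (j+1) := by
      rw [Finset.sum_range_succ' (fun j => ((-1 : ℝ) ^ (j-1) * (Nat.factorial (j-1) : ℝ) * (stirling2 n j : ℝ) * (j : ℝ)) * p μ ^ (j+1)) n]
      simp
    have h1 : ∑ j ∈ Finset.range n,
        (-1 : ℝ) ^ j * (Nat.factorial j : ℝ) * (stirling2 n (j+1) : ℝ) * (↑(j+1) : ℝ) * p μ ^ (j+1)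
        = ∑ j ∈ Finset.range (n+1),
        (-1 : ℝ) ^ j * (Nat.factorial j : ℝ) * (stirling2 n (j+1) : ℝ) * (↑(j+1) : ℝ) * p μ ^ (j+1) := by
      rw [Finset.sum_range_succ, stirling2_zero_of_lt n (n+1) (by omega)]
      simp
    rw [h1, h2, ← Finset.sum_sub_distrib]
    apply Finset.sum_congr rfl
    intro j hj
    rw [Finset.mem_range] at hj
    -- termwise identity
    cases j with
    | zero =>
      simp
      cases n with
      | zero => omega
      | succ m => simp [stirling2_succ_succ, stirling2_succ_zero, hp, hf]
    | succ i =>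
      simp only [Nat.add_sub_cancel]
      rw [stirling2_succ_succ n (i+1)]
      push_cast [Nat.factorial_succ]
      ring

/-- The `ℓ`-th cumulant of a Bernoulli(`r`) random variable, i.e. the `ℓ`-th
derivative at `μ = 0` of `μ ↦ ln(1 − r + r·e^μ)`, equals
`Σ_{k=1}^{ℓ} (−1)^{k−1}·(k−1)!·S(ℓ,k)·r^k`. -/
theorem statement15 (r : ℝ) (hr : r ∈ Set.Ioo (0 : ℝ) 1) (ℓ : ℕ) (hℓ : 1 ≤ ℓ) :
    iteratedDeriv ℓ (fun μ : ℝ => Real.log (1 - r + r * Real.exp μ)) 0 =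
      ∑ k ∈ Finset.Icc 1 ℓ,
        (-1 : ℝ) ^ (k - 1) * (Nat.factorial (k - 1) : ℝ) * (stirling2 ℓ k : ℝ) * r ^ k := by

  rw [key r hr ℓ hℓ]
  rw [show (Finset.Icc 1 ℓ) = Finset.Ico 1 (ℓ+1) from (Finset.Ico_add_one_right_eq_Icc 1 ℓ).symm,
    Finset.sum_Ico_eq_sum_range]
  simp only [Nat.add_sub_cancel]
  apply Finset.sum_congr rfl
  intro j _
  have : r * Real.exp 0 / (1 - r + r * Real.exp 0) = r := by
    rw [Real.exp_zero]; ring_nf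
  rw [this]
  simp [Nat.add_comm 1 j]
end

section
/- For every r ∈ (0,1) and every even time t = 2m with m ≥ 0, the probability that the reset Pólya walk experiences no resetting event and exactly m spontaneous returns to the origin up to time t equals (1−r)^{2m} · 2^{−m}; that is, P(N•_{2m} = 0 and N×_{2m} = m) = (1−r)^{2m}·2^{−m}. -/
open Finset Filter

open ResetPolya

namespace ResetPolyaAux

open ResetPolya

lemma pos_succ {t : ℕ} (ω : Fin t → Bool × Bool) (n : ℕ) (h : n < t)
    (hres : (ω ⟨n, h⟩).1 = false) :
    pos ω (n+1) = pos ω n + (if (ω ⟨n, h⟩).2 then 1 else -1) := by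
  simp [pos, h, hres]

lemma pos_parity {t : ℕ} (ω : Fin t → Bool × Bool)
    (hres : ∀ k, (ω k).1 = false) :
    ∀ n, n ≤ t → (pos ω n - n) % 2 = 0 := by
  intro n
  induction n with
  | zero => simp [pos]
  | succ n ih =>
    intro h
    have hn : n < t := h
    have H := ih (le_of_lt hn)
    rw [pos_succ ω n hn (hres _)]
    push_cast
    split <;> omega

/-- The set of odd indices in `Fin (2*m)`. -/
def odds (m : ℕ) : Finset (Fin (2*m)) :=
  (univ : Finset (Fin m)).image (fun j => (⟨2*j.1+1, by omega⟩ : Fin (2*m)))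

lemma card_odds (m : ℕ) : (odds m).card = m := by
  rw [odds, Finset.card_image_of_injective _ ?_, Finset.card_univ, Fintype.card_fin]
  intro a b hab
  have h : 2*a.1+1 = 2*b.1+1 := congrArg Fin.val hab
  exact Fin.ext (by omega)

lemma mem_odds {m : ℕ} (k : Fin (2*m)) : k ∈ odds m ↔ k.1 % 2 = 1 := by
  have hk := k.2
  simp only [odds, Finset.mem_image, Finset.mem_univ, true_and]
  constructor
  · rintro ⟨j, rfl⟩
    show (2*j.1+1) % 2 = 1
    omega
  · intro h
    refine ⟨⟨k.1/2, by omega⟩, ?_⟩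
    apply Fin.ext
    show 2*(k.1/2)+1 = k.1
    omega

/-- The event predicate, in convenient form. -/
def P {m : ℕ} (ω : Fin (2*m) → Bool × Bool) : Prop :=
  (∀ k, (ω k).1 = false) ∧
    ∀ j : ℕ, ∀ hj : j < m, (ω ⟨2*j+1, by omega⟩).2 = !(ω ⟨2*j, by omega⟩).2

lemma filter_sub_odds {m : ℕ} (ω : Fin (2*m) → Bool × Bool)
    (hres : ∀ k, (ω k).1 = false) :
    (Finset.univ.filter fun k : Fin (2*m) => (ω k).1 = false ∧ pos ω (k.1 + 1) = 0)
      ⊆ odds m := by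
  intro k hk
  simp only [Finset.mem_filter] at hk
  have hpar := pos_parity ω hres (k.1+1) (by omega)
  rw [hk.2.2] at hpar
  rw [mem_odds]
  push_cast at hpar
  omega

lemma event_iff {m : ℕ} (ω : Fin (2*m) → Bool × Bool) :
    (Ndot ω = 0 ∧ Ncross ω = m) ↔ P ω := by
  constructor
  · rintro ⟨h0, hm⟩
    have hres : ∀ k, (ω k).1 = false := by
      intro k
      have h := Finset.card_eq_zero.mp h0
      rw [Finset.filter_eq_empty_iff] at h
      simpa using h (Finset.mem_univ k)
    refine ⟨hres, ?_⟩
    have hSO : (Finset.univ.filter fun k : Fin (2*m) =>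
        (ω k).1 = false ∧ pos ω (k.1 + 1) = 0) = odds m :=
      Finset.eq_of_subset_of_card_le (filter_sub_odds ω hres)
        (by rw [card_odds]; exact le_of_eq hm.symm)
    -- every even position is zero
    have hz : ∀ j : ℕ, j < m → pos ω (2*j+1+1) = 0 := by
      intro j hj
      have hmem : (⟨2*j+1, by omega⟩ : Fin (2*m)) ∈ odds m := by
        rw [mem_odds]
        show (2*j+1) % 2 = 1
        omega
      rw [← hSO, Finset.mem_filter] at hmem
      exact hmem.2.2
    have hz0 : ∀ j : ℕ, j < m → pos ω (2*j) = 0 := by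
      intro j hj
      match j with
      | 0 => simp [pos]
      | i+1 =>
        have := hz i (by omega)
        have e : 2*(i+1) = 2*i+1+1 := by ring
        rw [e]; exact this
    intro j hj
    have e1 := pos_succ ω (2*j) (by omega) (hres _)
    have e2 := pos_succ ω (2*j+1) (by omega) (hres _)
    have h1 := hz j hj
    have h2 := hz0 j hj
    rw [e2, e1, h2] at h1
    cases hb : (ω ⟨2*j, by omega⟩).2 <;> cases hb' : (ω ⟨2*j+1, by omega⟩).2 <;>
      simp [hb, hb'] at h1 ⊢
  · rintro ⟨hres, halt⟩
    have hz : ∀ j : ℕ, j ≤ m → pos ω (2*j) = 0 := by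
      intro j
      induction j with
      | zero => simp [pos]
      | succ i ih =>
        intro h
        have hi := ih (by omega)
        have e1 := pos_succ ω (2*i) (by omega) (hres _)
        have e2 := pos_succ ω (2*i+1) (by omega) (hres _)
        have ha := halt i (by omega)
        have e : 2*(i+1) = 2*i+1+1 := by ring
        rw [e, e2, e1, hi, ha]
        cases hb : (ω ⟨2*i, by omega⟩).2 <;> simp [hb]
    constructor
    · rw [Ndot, Finset.card_eq_zero, Finset.filter_eq_empty_iff]
      intro k _
      simp [hres k]
    · rw [Ncross]
      have hSO : (Finset.univ.filter fun k : Fin (2*m) =>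
          (ω k).1 = false ∧ pos ω (k.1 + 1) = 0) = odds m := by
        apply Finset.Subset.antisymm (filter_sub_odds ω hres)
        intro k hk
        rw [mem_odds] at hk
        rw [Finset.mem_filter]
        refine ⟨Finset.mem_univ _, hres _, ?_⟩
        have hk2 := k.2
        have e : k.1 + 1 = 2*((k.1+1)/2) := by omega
        rw [e]
        exact hz _ (by omega)
      rw [hSO, card_odds]

/-- Encoding of the admissible outcomes by `m` free bits. -/
def enc {m : ℕ} (b : Fin m → Bool) : Fin (2*m) → Bool × Bool :=
  fun k => (false, xor (decide (k.1 % 2 = 1)) (b ⟨k.1/2, by have := k.2; omega⟩))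

lemma enc_even {m : ℕ} (b : Fin m → Bool) (j : ℕ) (hj : j < m) :
    enc b ⟨2*j, by omega⟩ = (false, b ⟨j, hj⟩) := by
  have h1 : (2*j) % 2 = 0 := by omega
  have h2 : (⟨2*j/2, by omega⟩ : Fin m) = ⟨j, hj⟩ := Fin.ext (by show 2*j/2 = j; omega)
  simp [enc, h1, h2]

lemma enc_odd {m : ℕ} (b : Fin m → Bool) (j : ℕ) (hj : j < m) :
    enc b ⟨2*j+1, by omega⟩ = (false, !(b ⟨j, hj⟩)) := by
  have h1 : (2*j+1) % 2 = 1 := by omega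
  have h2 : (⟨(2*j+1)/2, by omega⟩ : Fin m) = ⟨j, hj⟩ := Fin.ext (by show (2*j+1)/2 = j; omega)
  simp [enc, h1, h2]

lemma enc_injective {m : ℕ} : Function.Injective (enc (m := m)) := by
  intro b b' h
  funext j
  have hlt := j.2
  have heq := congrFun h ⟨2*j.1, by omega⟩
  rw [enc_even b j.1 j.2, enc_even b' j.1 j.2] at heq
  have := congrArg Prod.snd heq
  simpa using this

lemma filter_event_eq {m : ℕ} [DecidablePred (P (m := m))] :
    ((univ : Finset (Fin (2*m) → Bool × Bool)).filter P)
      = (univ : Finset (Fin m → Bool)).image enc := by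
  ext ω
  simp only [Finset.mem_filter, Finset.mem_univ, true_and, Finset.mem_image]
  constructor
  · rintro ⟨hres, halt⟩
    refine ⟨fun j => (ω ⟨2*j.1, by have := j.2; omega⟩).2, funext fun k => ?_⟩
    have hk2 := k.2
    have hlt : k.1/2 < m := by omega
    rcases Nat.mod_two_eq_zero_or_one k.1 with he | ho
    · have hk : k = ⟨2*(k.1/2), by omega⟩ := Fin.ext (by show k.1 = 2*(k.1/2); omega)
      rw [hk, enc_even _ _ hlt]
      refine Prod.ext ?_ ?_
      · exact (hres _).symm
      · rfl
    · have hk : k = ⟨2*(k.1/2)+1, by omega⟩ := Fin.ext (by show k.1 = 2*(k.1/2)+1; omega)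
      rw [hk, enc_odd _ _ hlt]
      refine Prod.ext ?_ ?_
      · exact (hres _).symm
      · exact (halt _ hlt).symm
  · rintro ⟨b, rfl⟩
    refine ⟨fun k => rfl, fun j hj => ?_⟩
    rw [enc_odd b j hj, enc_even b j hj]

lemma wt_enc {m : ℕ} (r : ℝ) (b : Fin m → Bool) :
    wt r (enc b) = ((1-r) * (1/2)) ^ (2*m) := by
  simp [wt, enc]

end ResetPolyaAux

open ResetPolyaAux

/-- The probability that the reset Pólya walk experiences no resetting event and
exactly `m` spontaneous returns to the origin up to the even time `2m` equals
`(1−r)^{2m}·2^{−m}`. -/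
theorem statement16 (r : ℝ) (hr : r ∈ Set.Ioo (0 : ℝ) 1) (m : ℕ) :
    prob r (2 * m) (fun ω => Ndot ω = 0 ∧ Ncross ω = m) =
      (1 - r) ^ (2 * m) * (2 : ℝ) ^ (-(m : ℤ)) := by
  classical
  unfold prob ResetPolya.expect
  simp only [event_iff, mul_ite, mul_one, mul_zero]
  rw [← Finset.sum_filter, filter_event_eq,
    Finset.sum_image (fun a _ b _ h => enc_injective h)]
  simp only [wt_enc, Finset.sum_const, Finset.card_univ, nsmul_eq_mul]
  have hc : (Fintype.card (Fin m → Bool) : ℝ) = 2^m := by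
    simp [Fintype.card_fun]
  rw [hc]
  rw [zpow_neg, zpow_natCast]
  rw [mul_pow, show 2*m = m + m from by ring, pow_add]
  field_simp
  have h2 : ((1:ℝ)/2)^(m*2) * 2^(m*2) = 1 := by rw [← mul_pow]; norm_num
  linear_combination (1-r)^(m*2) * h2
end
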